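/- arXiv:2512.23263 — 2 statements merged into one kernel-verified Lean document; each statement's English description precedes it below -/
import Mathlib

section
/- Let b̃ ∈ R^n satisfy the Diophantine condition |b̃·j| ≥ c/|j|^r (r > n−1, c > 0) and let (V,H) solve the linear system ∂_t V + V = b̃·∇H, ∂_t H = b̃·∇V on T^n with divergence-free, mean-zero initial data (V₀,H₀) ∈ H^m, m ≥ 1. Then for 0 ≤ s ≤ m−1, ‖V(t)‖_{H^s} ≤ C(1+t)^{−1/2−(m−s)/(2r)} ‖(V₀,H₀)‖_{H^m}, and for 0 ≤ s ≤ m, ‖H(t)‖_{H^s} ≤ C(1+t)^{−(m−s)/(2r)} ‖(V₀,H₀)‖_{H^m}. -/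
open scoped InnerProductSpace
open Real

noncomputable section

lemma hasDerivAt_norm_sq' {E : Type*} [NormedAddCommGroup E] [InnerProductSpace ℂ E]
    {f : ℝ → E} {f' : E} {t : ℝ} (hf : HasDerivAt f f' t) :
    HasDerivAt (fun τ => ‖f τ‖ ^ 2) (2 * (⟪f t, f'⟫_ℂ).re) t := by
  have h := Complex.reCLM.hasFDerivAt.comp_hasDerivAt t (hf.inner ℂ hf)
  simp only [Function.comp_def, Complex.reCLM_apply, Complex.add_re] at h
  have h2 : (⟪f t, f'⟫_ℂ).re + (⟪f', f t⟫_ℂ).re = 2 * (⟪f t, f'⟫_ℂ).re := by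
    rw [← inner_conj_symm (f t) f', Complex.conj_re]; ring
  rw [h2] at h
  refine h.congr_of_eventuallyEq (Filter.Eventually.of_forall fun τ => ?_)
  have := inner_self_eq_norm_sq (𝕜 := ℂ) (f τ)
  simpa [RCLike.re_to_complex] using this.symm

lemma hasDerivAt_re_inner' {E : Type*} [NormedAddCommGroup E] [InnerProductSpace ℂ E]
    {f g : ℝ → E} {f' g' : E} {t : ℝ} (hf : HasDerivAt f f' t) (hg : HasDerivAt g g' t) :
    HasDerivAt (fun τ => (⟪f τ, g τ⟫_ℂ).re) ((⟪f t, g'⟫_ℂ).re + (⟪f', g t⟫_ℂ).re) t := by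
  have h := Complex.reCLM.hasFDerivAt.comp_hasDerivAt t (hf.inner ℂ hg)
  simpa [Function.comp_def] using h

lemma innerA {E : Type*} [NormedAddCommGroup E] [InnerProductSpace ℂ E] (lam : ℝ) (x y : E) :
    (⟪x, (Complex.I * (lam:ℂ)) • y⟫_ℂ).re + (⟪y, (Complex.I * (lam:ℂ)) • x⟫_ℂ).re = 0 := by
  simp [inner_smul_right, Complex.mul_re]
  rw [← inner_conj_symm x y, Complex.conj_im]
  ring

lemma innerB {E : Type*} [NormedAddCommGroup E] [InnerProductSpace ℂ E] (lam : ℝ) (x : E) :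
    (⟪x, (Complex.I * (lam:ℂ)) • ((Complex.I * (lam:ℂ)) • x)⟫_ℂ).re = -(lam^2) * ‖x‖^2 := by
  simp [inner_smul_right, Complex.mul_re, inner_self_eq_norm_sq_to_K, ← Complex.ofReal_pow]
  ring

lemma innerC {E : Type*} [NormedAddCommGroup E] [InnerProductSpace ℂ E] (lam : ℝ) (x y : E) :
    (⟪-x + (Complex.I * (lam:ℂ)) • y, (Complex.I * (lam:ℂ)) • y⟫_ℂ).re
      = -(⟪x, (Complex.I * (lam:ℂ)) • y⟫_ℂ).re + lam^2 * ‖y‖^2 := by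
  simp [inner_add_left, inner_neg_left, inner_smul_left, inner_smul_right,
    Complex.mul_re, inner_self_eq_norm_sq_to_K, ← Complex.ofReal_pow]
  ring

lemma innerD {E : Type*} [NormedAddCommGroup E] [InnerProductSpace ℂ E] (lam : ℝ) (x y : E) :
    (⟪x, -x + (Complex.I * (lam:ℂ)) • y⟫_ℂ).re
      = -‖x‖^2 + (⟪x, (Complex.I * (lam:ℂ)) • y⟫_ℂ).re := by
  simp [inner_add_right, inner_neg_right, inner_self_eq_norm_sq_to_K, ← Complex.ofReal_pow]

lemma innerAbs {E : Type*} [NormedAddCommGroup E] [InnerProductSpace ℂ E] (lam : ℝ) (x y : E) :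
    |(⟪x, (Complex.I * (lam:ℂ)) • y⟫_ℂ).re| ≤ |lam| * (‖x‖ * ‖y‖) := by
  calc |(⟪x, (Complex.I * (lam:ℂ)) • y⟫_ℂ).re| ≤ ‖⟪x, (Complex.I * (lam:ℂ)) • y⟫_ℂ‖ :=
        Complex.abs_re_le_norm _
  _ ≤ ‖x‖ * ‖(Complex.I * (lam:ℂ)) • y‖ := norm_inner_le_norm _ _
  _ = |lam| * (‖x‖ * ‖y‖) := by simp [norm_smul]; ring


lemma sqrt_exp_half (x : ℝ) : Real.sqrt (Real.exp x) = Real.exp (x/2) := by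
  rw [show Real.exp x = (Real.exp (x/2))^2 by rw [sq, ← Real.exp_add]; ring_nf]
  exact Real.sqrt_sq (Real.exp_nonneg _)

lemma gronwall_aux (q : ℝ) (L D : ℝ → ℝ) (hd : ∀ t, HasDerivAt L (D t) t)
    (hkey : ∀ t, q / 5 * L t + D t ≤ 0) :
    ∀ t, 0 ≤ t → L t ≤ Real.exp (-(q * t) / 5) * L 0 := by
  have hdΦ : ∀ t : ℝ, HasDerivAt (fun τ => Real.exp (q/5*τ) * L τ)
      (Real.exp (q/5*t) * (q/5 * L t + D t)) t := by
    intro t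
    have h1 : HasDerivAt (fun τ : ℝ => Real.exp (q/5*τ)) (Real.exp (q/5*t) * (q/5)) t := by
      simpa using ((hasDerivAt_id t).const_mul (q/5)).exp
    have h2 := h1.mul (hd t)
    refine h2.congr_deriv ?_
    ring
  have hanti : AntitoneOn (fun τ => Real.exp (q/5*τ) * L τ) (Set.Ici (0:ℝ)) := by
    apply antitoneOn_of_deriv_nonpos (convex_Ici 0)
    · exact (continuous_iff_continuousAt.mpr
        (fun x => (hdΦ x).differentiableAt.continuousAt)).continuousOn
    · exact fun x _ => (hdΦ x).differentiableAt.differentiableWithinAt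
    · intro x _
      rw [(hdΦ x).deriv]
      have h1 := hkey x
      have h2 := Real.exp_pos (q/5*x)
      nlinarith
  intro t ht
  have hΦ : Real.exp (q/5*t) * L t ≤ L 0 := by
    have := hanti (Set.self_mem_Ici) (Set.mem_Ici.mpr ht) ht
    simpa using this
  have h2 : Real.exp (-(q*t)/5) * Real.exp (q/5*t) = 1 := by
    rw [← Real.exp_add]; ring_nf; exact Real.exp_zero
  calc L t = Real.exp (-(q*t)/5) * Real.exp (q/5*t) * L t := by rw [h2]; ring
  _ ≤ Real.exp (-(q*t)/5) * L 0 := by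
      rw [mul_assoc]
      exact mul_le_mul_of_nonneg_left hΦ (Real.exp_nonneg _)

lemma duhamel_aux {E : Type*} [NormedAddCommGroup E] [NormedSpace ℂ E] [CompleteSpace E]
    (W G : ℝ → E) (hW : ∀ t, HasDerivAt W (-(W t) + G t) t) (hG : Continuous G)
    (M k0 : ℝ) (hM : 0 ≤ M) (hk0 : 0 < k0)
    (hGb : ∀ s : ℝ, 0 ≤ s → ‖G s‖ ≤ M * Real.exp ((k0 - 1) * s)) :
    ∀ t : ℝ, 0 ≤ t →
      ‖W t‖ ≤ Real.exp (-t) * ‖W 0‖ + M / k0 * Real.exp ((k0 - 1) * t) := by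
  intro t ht
  have hF : ∀ τ : ℝ, HasDerivAt (fun σ => Real.exp σ • W σ) (Real.exp τ • G τ) τ := by
    intro τ
    have h1 := (Real.hasDerivAt_exp τ).smul (hW τ)
    convert h1 using 1
    · rfl
    rw [smul_add, smul_neg]
    abel
  have hWc : Continuous W := continuous_iff_continuousAt.mpr
    (fun τ => (hW τ).differentiableAt.continuousAt)
  have hcont : Continuous (fun σ : ℝ => Real.exp σ • G σ) := Real.continuous_exp.smul hG
  have hFTC : ∫ σ in (0:ℝ)..t, Real.exp σ • G σ
      = Real.exp t • W t - Real.exp 0 • W 0 :=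
    intervalIntegral.integral_eq_sub_of_hasDerivAt (fun x _ => hF x)
      (hcont.intervalIntegrable 0 t)
  have hbound : ‖∫ σ in (0:ℝ)..t, Real.exp σ • G σ‖ ≤ M / k0 * Real.exp (k0 * t) := by
    calc ‖∫ σ in (0:ℝ)..t, Real.exp σ • G σ‖
        ≤ ∫ σ in (0:ℝ)..t, ‖Real.exp σ • G σ‖ :=
          intervalIntegral.norm_integral_le_integral_norm ht
    _ ≤ ∫ σ in (0:ℝ)..t, M * Real.exp (k0 * σ) := by
        apply intervalIntegral.integral_mono_on ht
        · exact (hcont.norm).intervalIntegrable 0 t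
        · exact (Continuous.intervalIntegrable (by continuity) 0 t)
        · intro x hx
          rw [norm_smul, Real.norm_eq_abs, abs_of_nonneg (Real.exp_nonneg _)]
          have h1 := hGb x hx.1
          have h2 : Real.exp x * (M * Real.exp ((k0-1)*x)) = M * Real.exp (k0 * x) := by
            rw [mul_comm (Real.exp x), mul_assoc, ← Real.exp_add]
            ring_nf
          calc Real.exp x * ‖G x‖ ≤ Real.exp x * (M * Real.exp ((k0-1)*x)) :=
                mul_le_mul_of_nonneg_left h1 (Real.exp_nonneg _)
          _ = M * Real.exp (k0 * x) := h2
    _ ≤ M / k0 * Real.exp (k0 * t) := by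
        have hanti : ∫ σ in (0:ℝ)..t, M * Real.exp (k0 * σ)
            = M / k0 * (Real.exp (k0 * t) - Real.exp (k0 * 0)) := by
          have hder : ∀ x ∈ Set.uIcc (0:ℝ) t, HasDerivAt
              (fun σ => M / k0 * Real.exp (k0 * σ)) (M * Real.exp (k0 * x)) x := by
            intro x _
            have h3 : HasDerivAt (fun σ : ℝ => Real.exp (k0 * σ)) (Real.exp (k0 * x) * k0) x := by
              simpa using ((hasDerivAt_id x).const_mul k0).exp
            have h4 := h3.const_mul (M / k0)
            refine h4.congr_deriv ?_
            rw [mul_comm (Real.exp _) k0, ← mul_assoc, div_mul_cancel₀ M hk0.ne']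
          rw [intervalIntegral.integral_eq_sub_of_hasDerivAt hder
            (Continuous.intervalIntegrable (by continuity) 0 t)]
          ring
        rw [hanti]
        have h5 := Real.exp_pos (k0 * t)
        have h6 := Real.exp_pos (k0 * 0)
        have h7 : 0 ≤ M / k0 := div_nonneg hM hk0.le
        nlinarith
  have hFt : Real.exp t * ‖W t‖ ≤ ‖W 0‖ + M / k0 * Real.exp (k0 * t) := by
    have h8 : ‖Real.exp t • W t‖ - ‖Real.exp 0 • W 0‖ ≤ ‖Real.exp t • W t - Real.exp 0 • W 0‖ :=
      norm_sub_norm_le _ _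
    rw [← hFTC] at h8
    rw [norm_smul, norm_smul, Real.norm_eq_abs, Real.norm_eq_abs,
      abs_of_nonneg (Real.exp_nonneg _), abs_of_nonneg (Real.exp_nonneg _), Real.exp_zero,
      one_mul] at h8
    linarith [hbound]
  have h9 : ‖W t‖ = Real.exp (-t) * (Real.exp t * ‖W t‖) := by
    rw [← mul_assoc, ← Real.exp_add]
    simp
  rw [h9]
  calc Real.exp (-t) * (Real.exp t * ‖W t‖)
      ≤ Real.exp (-t) * (‖W 0‖ + M / k0 * Real.exp (k0 * t)) :=
        mul_le_mul_of_nonneg_left hFt (Real.exp_nonneg _)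
  _ = Real.exp (-t) * ‖W 0‖ + M / k0 * (Real.exp (-t) * Real.exp (k0 * t)) := by ring
  _ = Real.exp (-t) * ‖W 0‖ + M / k0 * Real.exp ((k0 - 1) * t) := by
      rw [← Real.exp_add]; ring_nf

section Mode
variable {E : Type*} [NormedAddCommGroup E] [InnerProductSpace ℂ E] [CompleteSpace E]

set_option maxHeartbeats 2000000 in
lemma mode_decay (lam : ℝ) (V H : ℝ → E)
    (hV : ∀ t, HasDerivAt V (-(V t) + (Complex.I * (lam : ℂ)) • H t) t)
    (hH : ∀ t, HasDerivAt H ((Complex.I * (lam : ℂ)) • V t) t) :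
    ∀ t : ℝ, 0 ≤ t →
      ‖V t‖ ^ 2 + ‖H t‖ ^ 2
          ≤ 2 * Real.exp (-(min (lam ^ 2) 1 * t) / 5) * (‖V 0‖ ^ 2 + ‖H 0‖ ^ 2) ∧
      ‖V t‖ ^ 2 ≤ 16 * (Real.exp (-2 * t)
          + min (lam ^ 2) 1 * Real.exp (-(min (lam ^ 2) 1 * t) / 5))
            * (‖V 0‖ ^ 2 + ‖H 0‖ ^ 2) := by
  obtain ⟨q, hqdef⟩ : ∃ q, q = min (lam ^ 2) 1 := ⟨_, rfl⟩
  have hq0 : 0 ≤ q := hqdef ▸ le_min (sq_nonneg lam) zero_le_one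
  have hq1 : q ≤ 1 := hqdef ▸ min_le_right _ _
  rw [← hqdef]
  obtain ⟨ε, hε0, hε2, hεlam, hεabs⟩ :
      ∃ ε : ℝ, 0 ≤ ε ∧ ε ≤ 1/2 ∧ ε * lam ^ 2 = q / 2 ∧ ε * |lam| ≤ 1/2 := by
    refine ⟨min 1 (lam ^ 2)⁻¹ / 2, ?_, ?_, ?_, ?_⟩
    · have : (0:ℝ) ≤ min 1 (lam ^ 2)⁻¹ := le_min zero_le_one (inv_nonneg.mpr (sq_nonneg lam))
      linarith
    · have : min 1 (lam ^ 2)⁻¹ ≤ 1 := min_le_left _ _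
      linarith
    · rw [hqdef]
      rcases le_or_gt (lam ^ 2) 1 with h | h
      · rcases eq_or_ne lam 0 with h0 | h0
        · simp [h0]
        · have hpos : 0 < lam ^ 2 := by positivity
          have h1 : (1:ℝ) ≤ (lam ^ 2)⁻¹ := one_le_inv_iff₀.mpr ⟨hpos, h⟩
          rw [min_eq_left h1, min_eq_left h]
          ring
      · have hpos : 0 < lam ^ 2 := by linarith
        have h1 : (lam ^ 2)⁻¹ ≤ 1 := by
          rw [inv_le_one_iff₀]; right; linarith
        rw [min_eq_right h1, min_eq_right h.le]
        field_simp
        exact div_self (by rintro rfl; norm_num at hpos)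
    · rcases le_or_gt (|lam|) 1 with h | h
      · have h1 : min 1 (lam ^ 2)⁻¹ ≤ 1 := min_le_left _ _
        have h2 : (0:ℝ) ≤ min 1 (lam ^ 2)⁻¹ := le_min zero_le_one (inv_nonneg.mpr (sq_nonneg lam))
        nlinarith [abs_nonneg lam]
      · have hpos : (0:ℝ) < |lam| := by linarith
        have h1 : min 1 (lam ^ 2)⁻¹ ≤ (lam ^ 2)⁻¹ := min_le_right _ _
        have h2 : (lam ^ 2)⁻¹ * |lam| = |lam|⁻¹ := by
          have hl : lam ≠ 0 := by simpa using ne_of_gt hpos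
          rw [← sq_abs lam]; field_simp
        have h3 : |lam|⁻¹ ≤ 1 := by
          rw [inv_le_one_iff₀]; right; linarith
        calc min 1 (lam ^ 2)⁻¹ / 2 * |lam| = min 1 (lam ^ 2)⁻¹ * |lam| / 2 := by ring
        _ ≤ (lam ^ 2)⁻¹ * |lam| / 2 := by
            have := mul_le_mul_of_nonneg_right h1 (abs_nonneg lam); linarith
        _ = |lam|⁻¹ / 2 := by rw [h2]
        _ ≤ 1/2 := by linarith
  set a : ℂ := Complex.I * (lam : ℂ) with ha
  -- the Lyapunov functional
  set g : ℝ → ℝ := fun τ => (⟪V τ, a • H τ⟫_ℂ).re with hgdef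
  set L : ℝ → ℝ := fun τ => ‖V τ‖ ^ 2 + ‖H τ‖ ^ 2 - ε * g τ with hLdef
  have hgb : ∀ τ : ℝ, |g τ| ≤ |lam| * (‖V τ‖ * ‖H τ‖) := fun τ => innerAbs lam (V τ) (H τ)
  have hcs : ∀ τ : ℝ, ‖V τ‖ * ‖H τ‖ ≤ (‖V τ‖ ^ 2 + ‖H τ‖ ^ 2) / 2 := by
    intro τ; nlinarith [sq_nonneg (‖V τ‖ - ‖H τ‖)]
  have hεg : ∀ τ : ℝ, ε * |g τ| ≤ (‖V τ‖ ^ 2 + ‖H τ‖ ^ 2) / 4 := by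
    intro τ
    have h1 : ε * |g τ| ≤ ε * (|lam| * (‖V τ‖ * ‖H τ‖)) :=
      mul_le_mul_of_nonneg_left (hgb τ) hε0
    have h2 : ε * (|lam| * (‖V τ‖ * ‖H τ‖)) = (ε * |lam|) * (‖V τ‖ * ‖H τ‖) := by ring
    have h3 : (ε * |lam|) * (‖V τ‖ * ‖H τ‖) ≤ (1/2) * (‖V τ‖ * ‖H τ‖) :=
      mul_le_mul_of_nonneg_right hεabs (mul_nonneg (norm_nonneg _) (norm_nonneg _))
    have h4 := hcs τ
    linarith
  have hL_low : ∀ τ : ℝ, (3/4) * (‖V τ‖ ^ 2 + ‖H τ‖ ^ 2) ≤ L τ := by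
    intro τ
    have := hεg τ
    have h5 : ε * g τ ≤ ε * |g τ| := mul_le_mul_of_nonneg_left (le_abs_self _) hε0
    simp only [hLdef]; linarith
  have hL_up : ∀ τ : ℝ, L τ ≤ (5/4) * (‖V τ‖ ^ 2 + ‖H τ‖ ^ 2) := by
    intro τ
    have := hεg τ
    have h5 : -(ε * g τ) ≤ ε * |g τ| := by
      have := mul_le_mul_of_nonneg_left (neg_abs_le (g τ)) hε0
      linarith [this]
    simp only [hLdef]; linarith
  -- derivative of L
  have hdL : ∀ t : ℝ, HasDerivAt L
      (-2 * ‖V t‖ ^ 2 + ε * lam ^ 2 * ‖V t‖ ^ 2 + ε * g t - ε * lam ^ 2 * ‖H t‖ ^ 2) t := by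
    intro t
    have h1 := (hasDerivAt_norm_sq' (hV t)).add (hasDerivAt_norm_sq' (hH t))
    have h2 := (hasDerivAt_re_inner' (hV t) ((hH t).const_smul a)).const_mul ε
    have h3 := h1.sub h2
    have hHV : (⟪H t, a • V t⟫_ℂ).re = -(g t) := by
      have := innerA lam (V t) (H t)
      simp only [hgdef, ← ha] at this ⊢
      linarith
    refine h3.congr_deriv ?_
    simp only [ha, Pi.smul_apply]
    rw [innerD lam (V t) (H t), innerB lam (V t), innerC lam (V t) (H t)]
    simp only [← ha, hHV]
    simp only [hgdef]
    ring
  -- the differential inequality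
  have key : ∀ t : ℝ, q / 5 * L t +
      (-2 * ‖V t‖ ^ 2 + ε * lam ^ 2 * ‖V t‖ ^ 2 + ε * g t - ε * lam ^ 2 * ‖H t‖ ^ 2) ≤ 0 := by
    intro t
    have hX0 : (0:ℝ) ≤ ‖V t‖ ^ 2 := sq_nonneg _
    have hY0 : (0:ℝ) ≤ ‖H t‖ ^ 2 := sq_nonneg _
    have hB1 : ε * g t ≤ ε / 2 * ‖V t‖ ^ 2 + ε * lam ^ 2 / 2 * ‖H t‖ ^ 2 := by
      have h1 : ε * g t ≤ ε * (|lam| * (‖V t‖ * ‖H t‖)) := by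
        have := mul_le_mul_of_nonneg_left (le_trans (le_abs_self _) (hgb t)) hε0
        linarith
      have h2 : ε * (|lam| * (‖V t‖ * ‖H t‖)) ≤ ε / 2 * ‖V t‖ ^ 2 + ε * |lam| ^ 2 / 2 * ‖H t‖ ^ 2 := by
        nlinarith [mul_nonneg hε0 (sq_nonneg (‖V t‖ - |lam| * ‖H t‖))]
      rw [sq_abs] at h2
      linarith
    have e1 : (1 - q/5) * (ε * g t)
        ≤ (1 - q/5) * (ε / 2 * ‖V t‖ ^ 2 + ε * lam ^ 2 / 2 * ‖H t‖ ^ 2) :=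
      mul_le_mul_of_nonneg_left hB1 (by linarith)
    have hW0 : (0:ℝ) ≤ ε / 2 * ‖V t‖ ^ 2 + ε * lam ^ 2 / 2 * ‖H t‖ ^ 2 := by positivity
    have e2 : (1 - q/5) * (ε / 2 * ‖V t‖ ^ 2 + ε * lam ^ 2 / 2 * ‖H t‖ ^ 2)
        ≤ ε / 2 * ‖V t‖ ^ 2 + ε * lam ^ 2 / 2 * ‖H t‖ ^ 2 := by
      nlinarith [mul_nonneg hq0 hW0, hW0]
    have e3 : ε / 2 * ‖V t‖ ^ 2 ≤ 1/4 * ‖V t‖ ^ 2 := by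
      nlinarith [mul_le_mul_of_nonneg_right hε2 hX0]
    have e4 : ε * lam ^ 2 / 2 * ‖H t‖ ^ 2 = q / 4 * ‖H t‖ ^ 2 := by
      rw [show ε * lam ^ 2 / 2 = q / 4 by rw [hεlam]; ring]
    have e5 : ε * lam ^ 2 * ‖V t‖ ^ 2 = q / 2 * ‖V t‖ ^ 2 := by rw [hεlam]
    have e6 : ε * lam ^ 2 * ‖H t‖ ^ 2 = q / 2 * ‖H t‖ ^ 2 := by rw [hεlam]
    have hqX : 0 ≤ q * ‖V t‖ ^ 2 := mul_nonneg hq0 hX0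
    have hqY : 0 ≤ q * ‖H t‖ ^ 2 := mul_nonneg hq0 hY0
    have hq1X : 0 ≤ (1 - q) * ‖V t‖ ^ 2 := mul_nonneg (by linarith) hX0
    have hLt : L t = ‖V t‖ ^ 2 + ‖H t‖ ^ 2 - ε * g t := rfl
    rw [hLt, e5, e6]
    linarith [e1, e2, e3, e4, hqX, hqY, hq1X]
  -- Gronwall
  have hLdecay := gronwall_aux q L _ hdL key
  have hE00 : (0:ℝ) ≤ ‖V 0‖ ^ 2 + ‖H 0‖ ^ 2 := by positivity
  have hE : ∀ τ : ℝ, 0 ≤ τ → ‖V τ‖ ^ 2 + ‖H τ‖ ^ 2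
      ≤ 2 * Real.exp (-(q * τ) / 5) * (‖V 0‖ ^ 2 + ‖H 0‖ ^ 2) := by
    intro τ hτ
    have h1 := hL_low τ
    have h2 := hL_up 0
    have h3 := Real.exp_pos (-(q*τ)/5)
    have h4 := hLdecay τ hτ
    nlinarith [mul_le_mul_of_nonneg_left h2 (Real.exp_nonneg (-(q*τ)/5)),
      mul_nonneg (Real.exp_nonneg (-(q*τ)/5)) hE00]
  -- pointwise bound on H
  have hHs : ∀ s : ℝ, 0 ≤ s → ‖H s‖
      ≤ Real.sqrt 2 * Real.sqrt (‖V 0‖ ^ 2 + ‖H 0‖ ^ 2) * Real.exp (-(q*s)/10) := by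
    intro s hs
    have h1 : ‖H s‖ ^ 2 ≤ 2 * Real.exp (-(q * s) / 5) * (‖V 0‖ ^ 2 + ‖H 0‖ ^ 2) := by
      have := hE s hs
      nlinarith [sq_nonneg (‖V s‖)]
    have h2 : ‖H s‖ = Real.sqrt (‖H s‖ ^ 2) := (Real.sqrt_sq (norm_nonneg _)).symm
    rw [h2]
    calc Real.sqrt (‖H s‖ ^ 2)
        ≤ Real.sqrt (2 * Real.exp (-(q * s) / 5) * (‖V 0‖ ^ 2 + ‖H 0‖ ^ 2)) :=
          Real.sqrt_le_sqrt h1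
    _ = Real.sqrt 2 * Real.sqrt (Real.exp (-(q * s) / 5)) *
          Real.sqrt (‖V 0‖ ^ 2 + ‖H 0‖ ^ 2) := by
        rw [Real.sqrt_mul (by positivity), Real.sqrt_mul (by norm_num)]
    _ = Real.sqrt 2 * Real.sqrt (‖V 0‖ ^ 2 + ‖H 0‖ ^ 2) * Real.exp (-(q*s)/10) := by
        rw [sqrt_exp_half]
        rw [show -(q * s) / 5 / 2 = -(q*s)/10 by ring]
        ring
  -- Duhamel
  have hHc : Continuous H := continuous_iff_continuousAt.mpr
    (fun τ => (hH τ).differentiableAt.continuousAt)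
  have hM0 : (0:ℝ) ≤ |lam| * (Real.sqrt 2 * Real.sqrt (‖V 0‖ ^ 2 + ‖H 0‖ ^ 2)) := by positivity
  have hk0 : (0:ℝ) < 1 - q/10 := by linarith
  have hduh := duhamel_aux V (fun s => a • H s) hV (hHc.const_smul a)
      (|lam| * (Real.sqrt 2 * Real.sqrt (‖V 0‖ ^ 2 + ‖H 0‖ ^ 2))) (1 - q/10) hM0 hk0 ?_
  swap
  · intro s hs
    have h1 : ‖a • H s‖ = |lam| * ‖H s‖ := by
      rw [norm_smul, ha]
      simp [Complex.norm_def]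
    rw [h1, show (1 - q/10 - 1) * s = -(q*s)/10 by ring]
    calc |lam| * ‖H s‖
        ≤ |lam| * (Real.sqrt 2 * Real.sqrt (‖V 0‖ ^ 2 + ‖H 0‖ ^ 2) * Real.exp (-(q*s)/10)) :=
          mul_le_mul_of_nonneg_left (hHs s hs) (abs_nonneg _)
    _ = |lam| * (Real.sqrt 2 * Real.sqrt (‖V 0‖ ^ 2 + ‖H 0‖ ^ 2)) * Real.exp (-(q*s)/10) := by
        ring
  intro t ht
  refine ⟨hE t ht, ?_⟩
  have hVt := hduh t ht
  rcases le_or_gt (lam ^ 2) 1 with hcase | hcase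
  · have hqeq : q = lam ^ 2 := by rw [hqdef, min_eq_left hcase]
    have hM9 : |lam| * (Real.sqrt 2 * Real.sqrt (‖V 0‖ ^ 2 + ‖H 0‖ ^ 2)) / (1 - q/10)
        ≤ (10/9) * (|lam| * (Real.sqrt 2 * Real.sqrt (‖V 0‖ ^ 2 + ‖H 0‖ ^ 2))) := by
      rw [div_le_iff₀ hk0]
      nlinarith [hM0, hq0]
    have hle : ‖V t‖ ≤ Real.exp (-t) * ‖V 0‖
        + (10/9) * (|lam| * (Real.sqrt 2 * Real.sqrt (‖V 0‖ ^ 2 + ‖H 0‖ ^ 2)))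
          * Real.exp (-(q*t)/10) := by
      have h2 : (1 - q/10 - 1) * t = -(q*t)/10 := by ring
      rw [h2] at hVt
      have h3 := Real.exp_pos (-(q*t)/10)
      calc ‖V t‖ ≤ Real.exp (-t) * ‖V 0‖
          + |lam| * (Real.sqrt 2 * Real.sqrt (‖V 0‖ ^ 2 + ‖H 0‖ ^ 2)) / (1 - q/10)
            * Real.exp (-(q*t)/10) := hVt
      _ ≤ _ := by
          have := mul_le_mul_of_nonneg_right hM9 h3.le
          linarith
    have hA0 : (0:ℝ) ≤ Real.exp (-t) * ‖V 0‖ := by positivity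
    have hB0 : (0:ℝ) ≤ (10/9) * (|lam| * (Real.sqrt 2 * Real.sqrt (‖V 0‖ ^ 2 + ‖H 0‖ ^ 2)))
        * Real.exp (-(q*t)/10) := by positivity
    have hsq : ‖V t‖ ^ 2 ≤ (Real.exp (-t) * ‖V 0‖
        + (10/9) * (|lam| * (Real.sqrt 2 * Real.sqrt (‖V 0‖ ^ 2 + ‖H 0‖ ^ 2)))
          * Real.exp (-(q*t)/10)) ^ 2 := by
      have := pow_le_pow_left₀ (norm_nonneg (V t)) hle 2
      exact this
    have hee : Real.exp (-t) * Real.exp (-t) = Real.exp (-2*t) := by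
      rw [← Real.exp_add]; ring_nf
    have heq : Real.exp (-(q*t)/10) * Real.exp (-(q*t)/10) = Real.exp (-(q*t)/5) := by
      rw [← Real.exp_add]; ring_nf
    have hs2 : Real.sqrt 2 * Real.sqrt 2 = 2 := Real.mul_self_sqrt (by norm_num)
    have hsE : Real.sqrt (‖V 0‖ ^ 2 + ‖H 0‖ ^ 2) * Real.sqrt (‖V 0‖ ^ 2 + ‖H 0‖ ^ 2)
        = ‖V 0‖ ^ 2 + ‖H 0‖ ^ 2 := Real.mul_self_sqrt hE00
    have hll : |lam| * |lam| = q := by rw [← sq_abs lam] at hqeq; rw [hqeq]; ring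
    have hA2 : (Real.exp (-t) * ‖V 0‖) ^ 2 = Real.exp (-2*t) * ‖V 0‖ ^ 2 := by
      calc (Real.exp (-t) * ‖V 0‖) ^ 2
          = (Real.exp (-t) * Real.exp (-t)) * (‖V 0‖ * ‖V 0‖) := by ring
      _ = Real.exp (-2*t) * ‖V 0‖ ^ 2 := by rw [hee]; ring
    have hB2 : ((10/9) * (|lam| * (Real.sqrt 2 * Real.sqrt (‖V 0‖ ^ 2 + ‖H 0‖ ^ 2)))
          * Real.exp (-(q*t)/10)) ^ 2
        = (200/81) * (q * (Real.exp (-(q*t)/5) * (‖V 0‖ ^ 2 + ‖H 0‖ ^ 2))) := by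
      calc ((10/9) * (|lam| * (Real.sqrt 2 * Real.sqrt (‖V 0‖ ^ 2 + ‖H 0‖ ^ 2)))
            * Real.exp (-(q*t)/10)) ^ 2
          = (100/81) * ((|lam| * |lam|) * ((Real.sqrt 2 * Real.sqrt 2)
              * ((Real.sqrt (‖V 0‖ ^ 2 + ‖H 0‖ ^ 2) * Real.sqrt (‖V 0‖ ^ 2 + ‖H 0‖ ^ 2))
              * (Real.exp (-(q*t)/10) * Real.exp (-(q*t)/10))))) := by ring
      _ = (200/81) * (q * (Real.exp (-(q*t)/5) * (‖V 0‖ ^ 2 + ‖H 0‖ ^ 2))) := by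
          rw [hll, hs2, hsE, heq]; ring
    nlinarith [hsq, hA0, hB0, hA2, hB2, sq_nonneg (Real.exp (-t) * ‖V 0‖
        - (10/9) * (|lam| * (Real.sqrt 2 * Real.sqrt (‖V 0‖ ^ 2 + ‖H 0‖ ^ 2)))
          * Real.exp (-(q*t)/10)),
      mul_nonneg (Real.exp_nonneg (-2*t)) (sq_nonneg (‖H 0‖)),
      mul_nonneg (mul_nonneg hq0 (Real.exp_nonneg (-(q*t)/5))) hE00,
      mul_nonneg (Real.exp_nonneg (-2*t)) hE00]
  · have hqeq : q = 1 := by rw [hqdef, min_eq_right hcase.le]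
    have h1 := hE t ht
    nlinarith [sq_nonneg (‖H t‖), mul_nonneg (Real.exp_nonneg (-2*t)) hE00,
      mul_nonneg (Real.exp_nonneg (-(q*t)/5)) hE00, hqeq]
end Mode

lemma rpow_mul_exp_neg_le (k : ℕ) {u : ℝ} (hu : 0 ≤ u) {β : ℝ} (hβ0 : 0 ≤ β)
    (hβk : β ≤ (k:ℝ)) : u ^ β * Real.exp (-u) ≤ 1 + (k.factorial : ℝ) := by
  have hfac : (0:ℝ) < (k.factorial : ℝ) := by positivity
  rcases le_total u 1 with h | h
  · have h1 : u ^ β ≤ 1 := Real.rpow_le_one hu h hβ0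
    have h2 : Real.exp (-u) ≤ 1 := by
      rw [← Real.exp_zero]; exact Real.exp_le_exp.mpr (by linarith)
    nlinarith [Real.exp_nonneg (-u), Real.rpow_nonneg hu β]
  · have h1 : u ^ β ≤ u ^ (k:ℝ) := Real.rpow_le_rpow_of_exponent_le h hβk
    rw [Real.rpow_natCast] at h1
    have h2 : u ^ k / (k.factorial : ℝ) ≤ Real.exp u := by
      refine le_trans ?_ (Real.sum_le_exp_of_nonneg (by linarith) (k+1))
      exact Finset.single_le_sum (f := fun i => u ^ i / (i.factorial : ℝ))
        (fun i _ => by positivity) (Finset.self_mem_range_succ k)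
    have h5 : u ^ k ≤ (k.factorial : ℝ) * Real.exp u := by
      rw [div_le_iff₀ hfac] at h2; linarith
    have h6 : u ^ β * Real.exp (-u) ≤ u ^ k * Real.exp (-u) :=
      mul_le_mul_of_nonneg_right h1 (Real.exp_nonneg _)
    have h7 : u ^ k * Real.exp (-u) ≤ (k.factorial : ℝ) := by
      rw [Real.exp_neg, ← div_eq_mul_inv, div_le_iff₀ (Real.exp_pos u)]
      linarith
    linarith

lemma scalarH (c1 P : ℝ) (hc1 : 0 < c1) (hc11 : c1 ≤ 1) (k : ℕ) (hPk : P ≤ (k:ℝ))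
    (q t β : ℝ) (ht : 0 ≤ t) (hq0 : 0 < q) (hq1 : q ≤ 1) (hβ0 : 0 ≤ β) (hβP : β ≤ P) :
    Real.exp (-(q * t) / 5) * (1 + t) ^ β * (q ^ β / c1 ^ β)
      ≤ Real.exp 1 * (5 / c1) ^ P * (1 + (k.factorial : ℝ)) := by
  have ht1 : (0:ℝ) < 1 + t := by linarith
  set u : ℝ := q * (1 + t) / 5 with hu
  have hu0 : 0 < u := by positivity
  have step1 : Real.exp (-(q * t) / 5) ≤ Real.exp 1 * Real.exp (-u) := by
    rw [← Real.exp_add]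
    exact Real.exp_le_exp.mpr (by rw [hu]; nlinarith)
  have e1 : (1 + t) ^ β * q ^ β = 5 ^ β * u ^ β := by
    rw [← Real.mul_rpow ht1.le hq0.le, ← Real.mul_rpow (by norm_num) hu0.le]
    congr 1
    rw [hu]; ring
  have e2 : (5:ℝ) ^ β / c1 ^ β = (5 / c1) ^ β := (Real.div_rpow (by norm_num) hc1.le _).symm
  have e3 : ((5:ℝ) / c1) ^ β ≤ (5 / c1) ^ P := by
    apply Real.rpow_le_rpow_of_exponent_le ?_ hβP
    rw [le_div_iff₀ hc1]; linarith
  have e4 : u ^ β * Real.exp (-u) ≤ 1 + (k.factorial : ℝ) :=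
    rpow_mul_exp_neg_le k hu0.le hβ0 (le_trans hβP hPk)
  have hrw : Real.exp (-(q * t) / 5) * (1 + t) ^ β * (q ^ β / c1 ^ β)
      = Real.exp (-(q * t) / 5) * ((5 ^ β / c1 ^ β) * (u ^ β)) := by
    calc Real.exp (-(q * t) / 5) * (1 + t) ^ β * (q ^ β / c1 ^ β)
        = Real.exp (-(q * t) / 5) * ((1 + t) ^ β * q ^ β) / c1 ^ β := by ring
    _ = Real.exp (-(q * t) / 5) * (5 ^ β * u ^ β) / c1 ^ β := by rw [e1]
    _ = Real.exp (-(q * t) / 5) * ((5 ^ β / c1 ^ β) * u ^ β) := by ring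
  rw [hrw, e2]
  have hnn1 : (0:ℝ) ≤ (5 / c1) ^ β := Real.rpow_nonneg (by positivity) _
  have hnn2 : (0:ℝ) ≤ u ^ β := Real.rpow_nonneg hu0.le _
  calc Real.exp (-(q * t) / 5) * ((5 / c1) ^ β * u ^ β)
      ≤ (Real.exp 1 * Real.exp (-u)) * ((5 / c1) ^ β * u ^ β) :=
        mul_le_mul_of_nonneg_right step1 (by positivity)
  _ = Real.exp 1 * (5 / c1) ^ β * (u ^ β * Real.exp (-u)) := by ring
  _ ≤ Real.exp 1 * (5 / c1) ^ P * (1 + (k.factorial : ℝ)) := by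
      apply mul_le_mul
      · exact mul_le_mul_of_nonneg_left e3 (Real.exp_nonneg 1)
      · exact e4
      · positivity
      · positivity

lemma scalarV1 (k : ℕ) (t β : ℝ) (ht : 0 ≤ t) (hβ0 : 0 ≤ β) (hβk : 1 + β ≤ (k:ℝ)) :
    Real.exp (-2 * t) * (1 + t) ^ (1 + β) ≤ Real.exp 2 * (1 + (k.factorial : ℝ)) := by
  have ht1 : (0:ℝ) < 1 + t := by linarith
  have step1 : Real.exp (-2 * t) ≤ Real.exp 2 * Real.exp (-(1 + t)) := by
    rw [← Real.exp_add]
    exact Real.exp_le_exp.mpr (by linarith)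
  have e4 : (1 + t) ^ (1 + β) * Real.exp (-(1 + t)) ≤ 1 + (k.factorial : ℝ) :=
    rpow_mul_exp_neg_le k ht1.le (by linarith) hβk
  have hnn : (0:ℝ) ≤ (1 + t) ^ (1 + β) := Real.rpow_nonneg ht1.le _
  calc Real.exp (-2 * t) * (1 + t) ^ (1 + β)
      ≤ (Real.exp 2 * Real.exp (-(1 + t))) * (1 + t) ^ (1 + β) :=
        mul_le_mul_of_nonneg_right step1 hnn
  _ = Real.exp 2 * ((1 + t) ^ (1 + β) * Real.exp (-(1 + t))) := by ring
  _ ≤ Real.exp 2 * (1 + (k.factorial : ℝ)) :=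
      mul_le_mul_of_nonneg_left e4 (Real.exp_nonneg 2)

lemma scalarV2 (c1 P : ℝ) (hc1 : 0 < c1) (hc11 : c1 ≤ 1) (k : ℕ) (hPk : 1 + P ≤ (k:ℝ))
    (q t β : ℝ) (ht : 0 ≤ t) (hq0 : 0 < q) (hq1 : q ≤ 1) (hβ0 : 0 ≤ β) (hβP : β ≤ P) :
    q * Real.exp (-(q * t) / 5) * (1 + t) ^ (1 + β) * (q ^ β / c1 ^ β)
      ≤ Real.exp 1 * 5 * (5 / c1) ^ P * (1 + (k.factorial : ℝ)) := by
  have ht1 : (0:ℝ) < 1 + t := by linarith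
  set u : ℝ := q * (1 + t) / 5 with hu
  have hu0 : 0 < u := by positivity
  have step1 : Real.exp (-(q * t) / 5) ≤ Real.exp 1 * Real.exp (-u) := by
    rw [← Real.exp_add]
    exact Real.exp_le_exp.mpr (by rw [hu]; nlinarith)
  have e0 : q * q ^ β = q ^ (1 + β) := by
    rw [Real.rpow_add hq0, Real.rpow_one]
  have e1 : (1 + t) ^ (1 + β) * q ^ (1 + β) = 5 ^ (1 + β) * u ^ (1 + β) := by
    rw [← Real.mul_rpow ht1.le hq0.le, ← Real.mul_rpow (by norm_num) hu0.le]
    congr 1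
    rw [hu]; ring
  have e2 : (5:ℝ) ^ (1 + β) / c1 ^ β = 5 * (5 / c1) ^ β := by
    rw [Real.rpow_add (by norm_num : (0:ℝ) < 5), Real.rpow_one, mul_div_assoc,
      ← Real.div_rpow (by norm_num) hc1.le]
  have e3 : ((5:ℝ) / c1) ^ β ≤ (5 / c1) ^ P := by
    apply Real.rpow_le_rpow_of_exponent_le ?_ hβP
    rw [le_div_iff₀ hc1]; linarith
  have e4 : u ^ (1 + β) * Real.exp (-u) ≤ 1 + (k.factorial : ℝ) :=
    rpow_mul_exp_neg_le k hu0.le (by linarith) (by linarith)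
  have hrw : q * Real.exp (-(q * t) / 5) * (1 + t) ^ (1 + β) * (q ^ β / c1 ^ β)
      = Real.exp (-(q * t) / 5) * ((5 * (5 / c1) ^ β) * u ^ (1 + β)) := by
    calc q * Real.exp (-(q * t) / 5) * (1 + t) ^ (1 + β) * (q ^ β / c1 ^ β)
        = Real.exp (-(q * t) / 5) * ((1 + t) ^ (1 + β) * (q * q ^ β)) / c1 ^ β := by ring
    _ = Real.exp (-(q * t) / 5) * ((1 + t) ^ (1 + β) * q ^ (1 + β)) / c1 ^ β := by rw [e0]
    _ = Real.exp (-(q * t) / 5) * (5 ^ (1 + β) * u ^ (1 + β)) / c1 ^ β := by rw [e1]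
    _ = Real.exp (-(q * t) / 5) * ((5 ^ (1 + β) / c1 ^ β) * u ^ (1 + β)) := by ring
    _ = Real.exp (-(q * t) / 5) * ((5 * (5 / c1) ^ β) * u ^ (1 + β)) := by rw [e2]
  rw [hrw]
  have hnn1 : (0:ℝ) ≤ (5 / c1) ^ β := Real.rpow_nonneg (by positivity) _
  have hnn2 : (0:ℝ) ≤ u ^ (1 + β) := Real.rpow_nonneg hu0.le _
  calc Real.exp (-(q * t) / 5) * ((5 * (5 / c1) ^ β) * u ^ (1 + β))
      ≤ (Real.exp 1 * Real.exp (-u)) * ((5 * (5 / c1) ^ β) * u ^ (1 + β)) :=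
        mul_le_mul_of_nonneg_right step1 (by positivity)
  _ = (Real.exp 1 * 5 * (5 / c1) ^ β) * (u ^ (1 + β) * Real.exp (-u)) := by ring
  _ ≤ (Real.exp 1 * 5 * (5 / c1) ^ P) * (1 + (k.factorial : ℝ)) := by
      apply mul_le_mul
      · apply mul_le_mul_of_nonneg_left e3 (by positivity)
      · exact e4
      · positivity
      · positivity
lemma sqrt_rpow_half {x : ℝ} (hx : 0 ≤ x) (y : ℝ) : Real.sqrt (x ^ y) = x ^ (y / 2) := by
  rw [Real.sqrt_eq_rpow, ← Real.rpow_mul hx]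
  congr 1
  ring

lemma sqrt_tsum_le {ι : Type*} (f h : ι → ℝ) (A : ℝ) (hA : 0 ≤ A) (h0 : ∀ i, 0 ≤ f i)
    (hle : ∀ i, f i ≤ A * h i) (hsum : Summable h) :
    Real.sqrt (∑' i, f i) ≤ Real.sqrt A * Real.sqrt (∑' i, h i) := by
  have h1 : Summable (fun i => A * h i) := hsum.mul_left A
  have h2 : Summable f := Summable.of_nonneg_of_le h0 hle h1
  have h3 : (∑' i, f i) ≤ A * ∑' i, h i := by
    rw [← tsum_mul_left]
    exact Summable.tsum_le_tsum hle h2 h1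
  calc Real.sqrt (∑' i, f i) ≤ Real.sqrt (A * ∑' i, h i) := Real.sqrt_le_sqrt h3
  _ = Real.sqrt A * Real.sqrt (∑' i, h i) := Real.sqrt_mul hA _
noncomputable section Main

/-- Euclidean norm of a lattice frequency `j ∈ ℤⁿ`. -/
noncomputable def jnorm (n : ℕ) (j : Fin n → ℤ) : ℝ :=
  Real.sqrt (∑ i, ((j i : ℝ)) ^ 2)

set_option maxHeartbeats 2000000 in
/-- Linear decay theorem (Theorem 1.1), stated on the Fourier side.  Let `b̃ ∈ ℝⁿ`
satisfy the Diophantine condition `|b̃·j| ≥ c/|j|^r` (`c > 0`, `r > n−1`) and let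
`(V, H)` solve `∂_t V + V = b̃·∇H`, `∂_t H = b̃·∇V` on `Tⁿ` with divergence-free,
mean-zero initial data `(V₀, H₀) ∈ H^m`, `m ≥ 1`.  Then for `0 ≤ s ≤ m − 1`,
`‖V(t)‖_{H^s} ≤ C (1+t)^{−1/2−(m−s)/(2r)} ‖(V₀,H₀)‖_{H^m}`, and for `0 ≤ s ≤ m`,
`‖H(t)‖_{H^s} ≤ C (1+t)^{−(m−s)/(2r)} ‖(V₀,H₀)‖_{H^m}`. -/
theorem stmt_11 (n : ℕ) (bt : Fin n → ℝ) (c r : ℝ) (hc : 0 < c) (hr : (n : ℝ) - 1 < r)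
    (hdio : ∀ j : Fin n → ℤ, j ≠ 0 → c / jnorm n j ^ r ≤ |∑ i, bt i * (j i : ℝ)|)
    (m : ℕ) (hm : 1 ≤ m)
    (V H : ℝ → (Fin n → ℤ) → EuclideanSpace ℂ (Fin n))
    (hV : ∀ (t : ℝ) (j : Fin n → ℤ), HasDerivAt (fun τ => V τ j)
      (-(V t j) + (Complex.I * ∑ i, (bt i : ℂ) * (j i : ℂ)) • H t j) t)
    (hH : ∀ (t : ℝ) (j : Fin n → ℤ), HasDerivAt (fun τ => H τ j)
      ((Complex.I * ∑ i, (bt i : ℂ) * (j i : ℂ)) • V t j) t)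
    (hdivV : ∀ (t : ℝ) (j : Fin n → ℤ), ∑ i, (j i : ℂ) * V t j i = 0)
    (hdivH : ∀ (t : ℝ) (j : Fin n → ℤ), ∑ i, (j i : ℂ) * H t j i = 0)
    (hmeanV : V 0 0 = 0) (hmeanH : H 0 0 = 0)
    (hdata : Summable (fun j : Fin n → ℤ =>
      (1 + jnorm n j ^ 2) ^ (m : ℝ) * (‖V 0 j‖ ^ 2 + ‖H 0 j‖ ^ 2))) :
    ∃ C > 0, ∀ t : ℝ, 0 ≤ t → ∀ s : ℝ, 0 ≤ s →
      ((s ≤ (m : ℝ) - 1 →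
        Real.sqrt (∑' j : Fin n → ℤ, (1 + jnorm n j ^ 2) ^ s * ‖V t j‖ ^ 2)
          ≤ C * (1 + t) ^ (-(1 / 2 : ℝ) - ((m : ℝ) - s) / (2 * r)) *
            Real.sqrt (∑' j : Fin n → ℤ,
              (1 + jnorm n j ^ 2) ^ (m : ℝ) * (‖V 0 j‖ ^ 2 + ‖H 0 j‖ ^ 2))) ∧
       (s ≤ (m : ℝ) →
        Real.sqrt (∑' j : Fin n → ℤ, (1 + jnorm n j ^ 2) ^ s * ‖H t j‖ ^ 2)
          ≤ C * (1 + t) ^ (-(((m : ℝ) - s) / (2 * r))) *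
            Real.sqrt (∑' j : Fin n → ℤ,
              (1 + jnorm n j ^ 2) ^ (m : ℝ) * (‖V 0 j‖ ^ 2 + ‖H 0 j‖ ^ 2)))) := by
  classical
  have hcast : ∀ j : Fin n → ℤ, (Complex.I * ∑ i, (bt i : ℂ) * (j i : ℂ))
      = Complex.I * (((∑ i, bt i * (j i : ℝ)) : ℝ) : ℂ) := by
    intro j
    congr 1
    push_cast
    rfl
  have hmode : ∀ j : Fin n → ℤ, ∀ t : ℝ, 0 ≤ t →
      ‖V t j‖ ^ 2 + ‖H t j‖ ^ 2
          ≤ 2 * Real.exp (-(min ((∑ i, bt i * (j i : ℝ)) ^ 2) 1 * t) / 5)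
            * (‖V 0 j‖ ^ 2 + ‖H 0 j‖ ^ 2) ∧
      ‖V t j‖ ^ 2 ≤ 16 * (Real.exp (-2 * t)
          + min ((∑ i, bt i * (j i : ℝ)) ^ 2) 1
            * Real.exp (-(min ((∑ i, bt i * (j i : ℝ)) ^ 2) 1 * t) / 5))
            * (‖V 0 j‖ ^ 2 + ‖H 0 j‖ ^ 2) := by
    intro j
    exact mode_decay (∑ i, bt i * (j i : ℝ)) (fun τ => V τ j) (fun τ => H τ j)
      (fun t => by have h := hV t j; rwa [hcast j] at h)
      (fun t => by have h := hH t j; rwa [hcast j] at h)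
  have hE00 : ∀ j : Fin n → ℤ, (0:ℝ) ≤ ‖V 0 j‖ ^ 2 + ‖H 0 j‖ ^ 2 := fun j => by positivity
  have hzero : ∀ t : ℝ, 0 ≤ t → ‖V t 0‖ ^ 2 = 0 ∧ ‖H t 0‖ ^ 2 = 0 := by
    intro t ht
    have h := (hmode 0 t ht).1
    rw [hmeanV, hmeanH] at h
    simp only [norm_zero] at h
    constructor <;> nlinarith [sq_nonneg (‖V t 0‖), sq_nonneg (‖H t 0‖)]
  have hw0 : ∀ j : Fin n → ℤ, (0:ℝ) < 1 + jnorm n j ^ 2 := by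
    intro j
    have := sq_nonneg (jnorm n j)
    linarith
  rcases le_or_gt r 0 with hr0 | hr0
  · -- degenerate case : n = 0, all modes vanish
    have hn0 : n = 0 := by
      have h1 : (n:ℝ) < 1 := by linarith
      exact_mod_cast Nat.lt_one_iff.mp (by exact_mod_cast h1)
    subst hn0
    have hall : ∀ j : Fin 0 → ℤ, j = 0 := fun j => funext (fun i => i.elim0)
    refine ⟨1, one_pos, fun t ht s hs => ⟨fun _ => ?_, fun _ => ?_⟩⟩
    · have hz : ∀ j : Fin 0 → ℤ, (1 + jnorm 0 j ^ 2) ^ s * ‖V t j‖ ^ 2 = 0 := by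
        intro j
        rw [hall j, (hzero t ht).1, mul_zero]
      rw [tsum_congr hz, tsum_zero, Real.sqrt_zero]
      positivity
    · have hz : ∀ j : Fin 0 → ℤ, (1 + jnorm 0 j ^ 2) ^ s * ‖H t j‖ ^ 2 = 0 := by
        intro j
        rw [hall j, (hzero t ht).2, mul_zero]
      rw [tsum_congr hz, tsum_zero, Real.sqrt_zero]
      positivity
  · -- main case
    obtain ⟨c1, hc1def⟩ : ∃ c1 : ℝ, c1 = min (c ^ 2) 1 := ⟨_, rfl⟩
    have hc10 : 0 < c1 := hc1def ▸ lt_min (by positivity) one_pos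
    have hc11 : c1 ≤ 1 := hc1def ▸ min_le_right _ _
    obtain ⟨P, hPdef⟩ : ∃ P : ℝ, P = (m : ℝ) / r := ⟨_, rfl⟩
    have hP0 : 0 ≤ P := hPdef ▸ by positivity
    obtain ⟨k, hkdef⟩ : ∃ k : ℕ, k = ⌈P⌉₊ + 1 := ⟨_, rfl⟩
    have hPk : 1 + P ≤ (k : ℝ) := by
      rw [hkdef]
      push_cast
      have := Nat.le_ceil P
      linarith
    obtain ⟨CH, hCHdef⟩ : ∃ CH : ℝ, CH = Real.exp 1 * (5 / c1) ^ P * (1 + (k.factorial : ℝ)) :=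
      ⟨_, rfl⟩
    obtain ⟨CV, hCVdef⟩ : ∃ CV : ℝ, CV = Real.exp 2 * (1 + (k.factorial : ℝ))
        + Real.exp 1 * 5 * (5 / c1) ^ P * (1 + (k.factorial : ℝ)) := ⟨_, rfl⟩
    have hCH0 : 0 < CH := by
      rw [hCHdef]
      have : (0:ℝ) < (5 / c1) ^ P := Real.rpow_pos_of_pos (by positivity) _
      positivity
    have hCV0 : 0 < CV := by
      rw [hCVdef]
      have : (0:ℝ) < (5 / c1) ^ P := Real.rpow_pos_of_pos (by positivity) _
      positivity
    refine ⟨Real.sqrt (2 * CH + 16 * CV) + 1, by positivity, ?_⟩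
    obtain ⟨C, hCdef⟩ : ∃ C : ℝ, C = Real.sqrt (2 * CH + 16 * CV) + 1 := ⟨_, rfl⟩
    rw [← hCdef]
    have hC0 : 0 < C := hCdef ▸ by positivity
    have hCsq2 : 2 * CH ≤ C ^ 2 ∧ 16 * CV ≤ C ^ 2 := by
      have h1 : Real.sqrt (2 * CH + 16 * CV) ^ 2 = 2 * CH + 16 * CV :=
        Real.sq_sqrt (by positivity)
      have h2 : 0 ≤ Real.sqrt (2 * CH + 16 * CV) := Real.sqrt_nonneg _
      constructor <;> (rw [hCdef]; nlinarith)
    -- lower bound on dissipation rate for nonzero modes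
    have hqlow : ∀ j : Fin n → ℤ, j ≠ 0 →
        c1 * (1 + jnorm n j ^ 2) ^ (-r) ≤ min ((∑ i, bt i * (j i : ℝ)) ^ 2) 1 := by
      intro j hj
      have hjn0 : 0 ≤ jnorm n j := Real.sqrt_nonneg _
      have hjsq : jnorm n j ^ 2 = ∑ i, ((j i : ℝ)) ^ 2 := Real.sq_sqrt (by positivity)
      have hj1 : 1 ≤ jnorm n j ^ 2 := by
        rw [hjsq]
        obtain ⟨i0, hi0⟩ : ∃ i, j i ≠ 0 := by
          by_contra hcon
          push_neg at hcon
          exact hj (funext hcon)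
        have h2 : (1:ℝ) ≤ |(j i0 : ℝ)| := by
          have h3 : (1:ℤ) ≤ |j i0| := Int.one_le_abs hi0
          calc (1:ℝ) = ((1:ℤ):ℝ) := by norm_num
          _ ≤ ((|j i0| : ℤ) : ℝ) := by exact_mod_cast h3
          _ = |(j i0 : ℝ)| := by push_cast; rfl
        have h1 : (1:ℝ) ≤ ((j i0 : ℝ)) ^ 2 := by nlinarith [sq_abs ((j i0 : ℝ))]
        exact le_trans h1 (Finset.single_le_sum (f := fun i => ((j i : ℝ)) ^ 2)
          (fun i _ => sq_nonneg _) (Finset.mem_univ i0))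
      have hjpos : (0:ℝ) < jnorm n j := by nlinarith
      have hjr : 0 < jnorm n j ^ r := Real.rpow_pos_of_pos hjpos r
      have hd := hdio j hj
      -- square the Diophantine bound
      have hlam2 : (c / jnorm n j ^ r) ^ 2 ≤ (∑ i, bt i * (j i : ℝ)) ^ 2 := by
        have habs : 0 ≤ c / jnorm n j ^ r := by positivity
        nlinarith [sq_abs (∑ i, bt i * (j i : ℝ)), abs_nonneg (∑ i, bt i * (j i : ℝ))]
      have he1 : (jnorm n j ^ r) ^ 2 = (jnorm n j ^ 2 : ℝ) ^ r := by
        rw [← Real.rpow_natCast (jnorm n j ^ r) 2, ← Real.rpow_mul hjn0,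
          ← Real.rpow_natCast (jnorm n j) 2, ← Real.rpow_mul hjn0]
        norm_num
        ring_nf
      have he2 : (jnorm n j ^ 2 : ℝ) ^ r ≤ (1 + jnorm n j ^ 2) ^ r :=
        Real.rpow_le_rpow (by positivity) (by linarith) hr0.le
      have hwr : (0:ℝ) < (1 + jnorm n j ^ 2) ^ r := Real.rpow_pos_of_pos (hw0 j) r
      have hj2pos : (0:ℝ) < (jnorm n j ^ 2 : ℝ) ^ r := Real.rpow_pos_of_pos (by nlinarith) r
      refine le_min ?_ ?_
      · -- c1 * w^(-r) ≤ lam^2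
        have h4 : c ^ 2 / (1 + jnorm n j ^ 2) ^ r ≤ c ^ 2 / (jnorm n j ^ 2 : ℝ) ^ r :=
          div_le_div_of_nonneg_left (by positivity) hj2pos he2
        have h5 : c ^ 2 / (jnorm n j ^ 2 : ℝ) ^ r = (c / jnorm n j ^ r) ^ 2 := by
          rw [div_pow, he1]
        have h6 : c1 * (1 + jnorm n j ^ 2) ^ (-r) ≤ c ^ 2 / (1 + jnorm n j ^ 2) ^ r := by
          rw [Real.rpow_neg (hw0 j).le, div_eq_mul_inv]
          exact mul_le_mul_of_nonneg_right (hc1def ▸ min_le_left _ _)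
            (inv_nonneg.mpr hwr.le)
        linarith [h4, h5 ▸ hlam2]
      · -- c1 * w^(-r) ≤ 1
        have h7 : (1 + jnorm n j ^ 2) ^ (-r) ≤ 1 :=
          Real.rpow_le_one_of_one_le_of_nonpos (by linarith) (by linarith)
        have h8 : (0:ℝ) ≤ (1 + jnorm n j ^ 2) ^ (-r) := Real.rpow_nonneg (hw0 j).le _
        nlinarith
    intro t ht s hs
    have ht1 : (0:ℝ) < 1 + t := by linarith
    -- frequency-wise scalar bounds
    have hres : ∀ j : Fin n → ℤ, j ≠ 0 → ∀ β : ℝ, 0 ≤ β → β ≤ P →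
        Real.exp (-(min ((∑ i, bt i * (j i : ℝ)) ^ 2) 1 * t) / 5) * (1 + t) ^ β
            ≤ CH * (1 + jnorm n j ^ 2) ^ (r * β) ∧
        min ((∑ i, bt i * (j i : ℝ)) ^ 2) 1
            * Real.exp (-(min ((∑ i, bt i * (j i : ℝ)) ^ 2) 1 * t) / 5) * (1 + t) ^ (1 + β)
            ≤ Real.exp 1 * 5 * (5 / c1) ^ P * (1 + (k.factorial : ℝ))
              * (1 + jnorm n j ^ 2) ^ (r * β) := by
      intro j hj β hβ0 hβP
      obtain ⟨q, hqdef⟩ : ∃ q : ℝ, q = min ((∑ i, bt i * (j i : ℝ)) ^ 2) 1 := ⟨_, rfl⟩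
      rw [← hqdef]
      have hql := hqdef ▸ hqlow j hj
      have hq0 : 0 < q := lt_of_lt_of_le
        (by positivity : (0:ℝ) < c1 * (1 + jnorm n j ^ 2) ^ (-r)) hql
      have hq1 : q ≤ 1 := hqdef ▸ min_le_right _ _
      have hwrpos : (0:ℝ) < (1 + jnorm n j ^ 2) ^ r := Real.rpow_pos_of_pos (hw0 j) r
      have h1 : c1 / q ≤ (1 + jnorm n j ^ 2) ^ r := by
        rw [Real.rpow_neg (hw0 j).le, ← div_eq_mul_inv] at hql
        rw [div_le_iff₀ hq0]
        rw [div_le_iff₀ hwrpos] at hql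
        linarith
      have h2 : (c1 / q) ^ β ≤ (1 + jnorm n j ^ 2) ^ (r * β) := by
        rw [Real.rpow_mul (hw0 j).le]
        exact Real.rpow_le_rpow (by positivity) h1 hβ0
      have hqb : (0:ℝ) < q ^ β := Real.rpow_pos_of_pos hq0 β
      have hcb : (0:ℝ) < c1 ^ β := Real.rpow_pos_of_pos hc10 β
      have hdiv : (c1 / q) ^ β = c1 ^ β / q ^ β := Real.div_rpow hc10.le hq0.le β
      constructor
      · have hsH := scalarH c1 P hc10 hc11 k (by linarith) q t β ht hq0 hq1 hβ0 hβP
        have hkey : Real.exp (-(q * t) / 5) * (1 + t) ^ β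
            = (Real.exp (-(q * t) / 5) * (1 + t) ^ β * (q ^ β / c1 ^ β)) * (c1 ^ β / q ^ β) := by
          field_simp
        rw [hkey]
        calc (Real.exp (-(q * t) / 5) * (1 + t) ^ β * (q ^ β / c1 ^ β)) * (c1 ^ β / q ^ β)
            ≤ (Real.exp 1 * (5 / c1) ^ P * (1 + (k.factorial : ℝ))) * (c1 ^ β / q ^ β) :=
              mul_le_mul_of_nonneg_right hsH (by positivity)
        _ = CH * (c1 / q) ^ β := by rw [hdiv, hCHdef]
        _ ≤ CH * (1 + jnorm n j ^ 2) ^ (r * β) :=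
              mul_le_mul_of_nonneg_left h2 hCH0.le
      · have hsV := scalarV2 c1 P hc10 hc11 k hPk q t β ht hq0 hq1 hβ0 hβP
        have hkey : q * Real.exp (-(q * t) / 5) * (1 + t) ^ (1 + β)
            = (q * Real.exp (-(q * t) / 5) * (1 + t) ^ (1 + β) * (q ^ β / c1 ^ β))
              * (c1 ^ β / q ^ β) := by
          field_simp
        rw [hkey]
        calc (q * Real.exp (-(q * t) / 5) * (1 + t) ^ (1 + β) * (q ^ β / c1 ^ β))
              * (c1 ^ β / q ^ β)
            ≤ (Real.exp 1 * 5 * (5 / c1) ^ P * (1 + (k.factorial : ℝ))) * (c1 ^ β / q ^ β) :=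
              mul_le_mul_of_nonneg_right hsV (by positivity)
        _ = (Real.exp 1 * 5 * (5 / c1) ^ P * (1 + (k.factorial : ℝ))) * (c1 / q) ^ β := by
              rw [hdiv]
        _ ≤ _ := mul_le_mul_of_nonneg_left h2 (by positivity)
    constructor
    · -- the V estimate
      intro hsm1
      have hsm : s ≤ (m : ℝ) := by linarith
      obtain ⟨β, hβdef⟩ : ∃ β : ℝ, β = ((m : ℝ) - s) / r := ⟨_, rfl⟩
      have hβ0 : 0 ≤ β := hβdef ▸ div_nonneg (by linarith) hr0.le
      have hβP : β ≤ P := by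
        rw [hβdef, hPdef, div_le_div_iff₀ hr0 hr0]
        nlinarith [mul_le_mul_of_nonneg_right (show (m:ℝ) - s ≤ (m:ℝ) by linarith) hr0.le]
      have hrβ : r * β = (m : ℝ) - s := by
        rw [hβdef]
        field_simp
      -- pointwise claim
      have claimV : ∀ j : Fin n → ℤ,
          (1 + jnorm n j ^ 2) ^ s * ‖V t j‖ ^ 2
            ≤ (16 * CV * (1 + t) ^ (-(1 + β)))
              * ((1 + jnorm n j ^ 2) ^ (m : ℝ) * (‖V 0 j‖ ^ 2 + ‖H 0 j‖ ^ 2)) := by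
        intro j
        rcases eq_or_ne j 0 with rfl | hj
        · rw [(hzero t ht).1, hmeanV, hmeanH]
          simp
        · obtain ⟨hres1, hres2⟩ := hres j hj β hβ0 hβP
          have hw1 : (1:ℝ) ≤ 1 + jnorm n j ^ 2 := by
            have := sq_nonneg (jnorm n j); linarith
          have hwm : (1 + jnorm n j ^ 2) ^ (m : ℝ)
              = (1 + jnorm n j ^ 2) ^ s * (1 + jnorm n j ^ 2) ^ (r * β) := by
            rw [← Real.rpow_add (hw0 j)]
            congr 1
            rw [hrβ]; ring
          have hone : (1 + t) ^ (1 + β) * (1 + t) ^ (-(1 + β)) = 1 := by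
            rw [← Real.rpow_add ht1, show (1 + β) + (-(1 + β)) = 0 by ring, Real.rpow_zero]
          have hbm := (hmode j t ht).2
          have hws : (0:ℝ) ≤ (1 + jnorm n j ^ 2) ^ s := Real.rpow_nonneg (hw0 j).le _
          have htneg : (0:ℝ) ≤ (1 + t) ^ (-(1 + β)) := Real.rpow_nonneg ht1.le _
          -- transfer: exp(-2t) * w^s ≤ CV1 * (1+t)^(-(1+β)) * w^m  etc.
          have hV1 := scalarV1 k t β ht hβ0 (by linarith)
          have hws_le : (1 + jnorm n j ^ 2) ^ s ≤ (1 + jnorm n j ^ 2) ^ (m : ℝ) :=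
            Real.rpow_le_rpow_of_exponent_le hw1 hsm
          have key1 : Real.exp (-2 * t) * (1 + jnorm n j ^ 2) ^ s
              ≤ (Real.exp 2 * (1 + (k.factorial : ℝ))) * (1 + t) ^ (-(1 + β))
                * (1 + jnorm n j ^ 2) ^ (m : ℝ) := by
            calc Real.exp (-2 * t) * (1 + jnorm n j ^ 2) ^ s
                = (Real.exp (-2 * t) * (1 + t) ^ (1 + β)) * (1 + t) ^ (-(1 + β))
                  * (1 + jnorm n j ^ 2) ^ s := by
                  rw [mul_assoc (Real.exp (-2 * t)), hone]; ring
            _ ≤ (Real.exp 2 * (1 + (k.factorial : ℝ))) * (1 + t) ^ (-(1 + β))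
                  * (1 + jnorm n j ^ 2) ^ s := by
                  have := mul_le_mul_of_nonneg_right
                    (mul_le_mul_of_nonneg_right hV1 htneg) hws
                  linarith
            _ ≤ _ := by
                  apply mul_le_mul_of_nonneg_left hws_le
                  positivity
          have key2 : min ((∑ i, bt i * (j i : ℝ)) ^ 2) 1
                * Real.exp (-(min ((∑ i, bt i * (j i : ℝ)) ^ 2) 1 * t) / 5)
                * (1 + jnorm n j ^ 2) ^ s
              ≤ (Real.exp 1 * 5 * (5 / c1) ^ P * (1 + (k.factorial : ℝ)))
                * (1 + t) ^ (-(1 + β)) * (1 + jnorm n j ^ 2) ^ (m : ℝ) := by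
            calc min ((∑ i, bt i * (j i : ℝ)) ^ 2) 1
                  * Real.exp (-(min ((∑ i, bt i * (j i : ℝ)) ^ 2) 1 * t) / 5)
                  * (1 + jnorm n j ^ 2) ^ s
                = (min ((∑ i, bt i * (j i : ℝ)) ^ 2) 1
                    * Real.exp (-(min ((∑ i, bt i * (j i : ℝ)) ^ 2) 1 * t) / 5)
                    * (1 + t) ^ (1 + β)) * (1 + t) ^ (-(1 + β))
                  * (1 + jnorm n j ^ 2) ^ s := by
                  rw [mul_assoc (min ((∑ i, bt i * (j i : ℝ)) ^ 2) 1
                    * Real.exp (-(min ((∑ i, bt i * (j i : ℝ)) ^ 2) 1 * t) / 5)), hone]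
                  ring
            _ ≤ ((Real.exp 1 * 5 * (5 / c1) ^ P * (1 + (k.factorial : ℝ)))
                  * (1 + jnorm n j ^ 2) ^ (r * β)) * (1 + t) ^ (-(1 + β))
                  * (1 + jnorm n j ^ 2) ^ s := by
                  have := mul_le_mul_of_nonneg_right
                    (mul_le_mul_of_nonneg_right hres2 htneg) hws
                  linarith
            _ = (Real.exp 1 * 5 * (5 / c1) ^ P * (1 + (k.factorial : ℝ)))
                  * (1 + t) ^ (-(1 + β)) * ((1 + jnorm n j ^ 2) ^ s
                    * (1 + jnorm n j ^ 2) ^ (r * β)) := by ring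
            _ = _ := by rw [← hwm]
          -- combine
          have hE0 := hE00 j
          calc (1 + jnorm n j ^ 2) ^ s * ‖V t j‖ ^ 2
              ≤ (1 + jnorm n j ^ 2) ^ s * (16 * (Real.exp (-2 * t)
                  + min ((∑ i, bt i * (j i : ℝ)) ^ 2) 1
                    * Real.exp (-(min ((∑ i, bt i * (j i : ℝ)) ^ 2) 1 * t) / 5))
                  * (‖V 0 j‖ ^ 2 + ‖H 0 j‖ ^ 2)) :=
                mul_le_mul_of_nonneg_left hbm hws
          _ = 16 * ((Real.exp (-2 * t) * (1 + jnorm n j ^ 2) ^ s)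
                + (min ((∑ i, bt i * (j i : ℝ)) ^ 2) 1
                  * Real.exp (-(min ((∑ i, bt i * (j i : ℝ)) ^ 2) 1 * t) / 5)
                  * (1 + jnorm n j ^ 2) ^ s)) * (‖V 0 j‖ ^ 2 + ‖H 0 j‖ ^ 2) := by ring
          _ ≤ 16 * ((Real.exp 2 * (1 + (k.factorial : ℝ))) * (1 + t) ^ (-(1 + β))
                  * (1 + jnorm n j ^ 2) ^ (m : ℝ)
                + (Real.exp 1 * 5 * (5 / c1) ^ P * (1 + (k.factorial : ℝ)))
                  * (1 + t) ^ (-(1 + β)) * (1 + jnorm n j ^ 2) ^ (m : ℝ))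
                * (‖V 0 j‖ ^ 2 + ‖H 0 j‖ ^ 2) := by
                apply mul_le_mul_of_nonneg_right ?_ hE0
                have := add_le_add key1 key2
                linarith
          _ = (16 * CV * (1 + t) ^ (-(1 + β)))
              * ((1 + jnorm n j ^ 2) ^ (m : ℝ) * (‖V 0 j‖ ^ 2 + ‖H 0 j‖ ^ 2)) := by
                rw [hCVdef]; ring
      -- sum up
      have hsqrt := sqrt_tsum_le
        (fun j : Fin n → ℤ => (1 + jnorm n j ^ 2) ^ s * ‖V t j‖ ^ 2)
        (fun j : Fin n → ℤ => (1 + jnorm n j ^ 2) ^ (m : ℝ) * (‖V 0 j‖ ^ 2 + ‖H 0 j‖ ^ 2))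
        (16 * CV * (1 + t) ^ (-(1 + β)))
        (by positivity)
        (fun j => by positivity)
        claimV hdata
      refine le_trans hsqrt ?_
      have hsplit : Real.sqrt (16 * CV * (1 + t) ^ (-(1 + β)))
          = Real.sqrt (16 * CV) * (1 + t) ^ (-(1 + β) / 2) := by
        rw [Real.sqrt_mul (by positivity), sqrt_rpow_half ht1.le]
      rw [hsplit]
      have hexp_eq : (-(1 + β) / 2 : ℝ) = -(1 / 2 : ℝ) - ((m : ℝ) - s) / (2 * r) := by
        rw [hβdef]
        field_simp
        ring
      rw [hexp_eq]
      apply mul_le_mul_of_nonneg_right ?_ (Real.sqrt_nonneg _)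
      apply mul_le_mul_of_nonneg_right ?_ (Real.rpow_nonneg ht1.le _)
      -- sqrt (16 CV) ≤ C
      have h16 : Real.sqrt (16 * CV) ≤ C := by
        have := hCsq2.2
        calc Real.sqrt (16 * CV) ≤ Real.sqrt (C ^ 2) := Real.sqrt_le_sqrt this
        _ = C := Real.sqrt_sq hC0.le
      exact h16
    · -- the H estimate
      intro hsm
      obtain ⟨β, hβdef⟩ : ∃ β : ℝ, β = ((m : ℝ) - s) / r := ⟨_, rfl⟩
      have hβ0 : 0 ≤ β := hβdef ▸ div_nonneg (by linarith) hr0.le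
      have hβP : β ≤ P := by
        rw [hβdef, hPdef, div_le_div_iff₀ hr0 hr0]
        nlinarith [mul_le_mul_of_nonneg_right (show (m:ℝ) - s ≤ (m:ℝ) by linarith) hr0.le]
      have hrβ : r * β = (m : ℝ) - s := by
        rw [hβdef]
        field_simp
      have claimH : ∀ j : Fin n → ℤ,
          (1 + jnorm n j ^ 2) ^ s * ‖H t j‖ ^ 2
            ≤ (2 * CH * (1 + t) ^ (-β))
              * ((1 + jnorm n j ^ 2) ^ (m : ℝ) * (‖V 0 j‖ ^ 2 + ‖H 0 j‖ ^ 2)) := by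
        intro j
        rcases eq_or_ne j 0 with rfl | hj
        · rw [(hzero t ht).2, hmeanV, hmeanH]
          simp
        · obtain ⟨hres1, _⟩ := hres j hj β hβ0 hβP
          have hw1 : (1:ℝ) ≤ 1 + jnorm n j ^ 2 := by
            have := sq_nonneg (jnorm n j); linarith
          have hwm : (1 + jnorm n j ^ 2) ^ (m : ℝ)
              = (1 + jnorm n j ^ 2) ^ s * (1 + jnorm n j ^ 2) ^ (r * β) := by
            rw [← Real.rpow_add (hw0 j)]
            congr 1
            rw [hrβ]; ring
          have hone : (1 + t) ^ β * (1 + t) ^ (-β) = 1 := by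
            rw [← Real.rpow_add ht1, show β + (-β) = 0 by ring, Real.rpow_zero]
          have hbm := (hmode j t ht).1
          have hws : (0:ℝ) ≤ (1 + jnorm n j ^ 2) ^ s := Real.rpow_nonneg (hw0 j).le _
          have htneg : (0:ℝ) ≤ (1 + t) ^ (-β) := Real.rpow_nonneg ht1.le _
          have hHt : ‖H t j‖ ^ 2 ≤ 2 * Real.exp
              (-(min ((∑ i, bt i * (j i : ℝ)) ^ 2) 1 * t) / 5)
              * (‖V 0 j‖ ^ 2 + ‖H 0 j‖ ^ 2) := by
            nlinarith [sq_nonneg (‖V t j‖)]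
          have key1 : Real.exp (-(min ((∑ i, bt i * (j i : ℝ)) ^ 2) 1 * t) / 5)
                * (1 + jnorm n j ^ 2) ^ s
              ≤ CH * (1 + t) ^ (-β) * (1 + jnorm n j ^ 2) ^ (m : ℝ) := by
            calc Real.exp (-(min ((∑ i, bt i * (j i : ℝ)) ^ 2) 1 * t) / 5)
                  * (1 + jnorm n j ^ 2) ^ s
                = (Real.exp (-(min ((∑ i, bt i * (j i : ℝ)) ^ 2) 1 * t) / 5)
                    * (1 + t) ^ β) * (1 + t) ^ (-β) * (1 + jnorm n j ^ 2) ^ s := by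
                  rw [mul_assoc (Real.exp (-(min ((∑ i, bt i * (j i : ℝ)) ^ 2) 1 * t) / 5)),
                    hone]
                  ring
            _ ≤ (CH * (1 + jnorm n j ^ 2) ^ (r * β)) * (1 + t) ^ (-β)
                  * (1 + jnorm n j ^ 2) ^ s := by
                  have := mul_le_mul_of_nonneg_right
                    (mul_le_mul_of_nonneg_right hres1 htneg) hws
                  linarith
            _ = CH * (1 + t) ^ (-β)
                  * ((1 + jnorm n j ^ 2) ^ s * (1 + jnorm n j ^ 2) ^ (r * β)) := by ring
            _ = _ := by rw [← hwm]
          have hE0 := hE00 j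
          calc (1 + jnorm n j ^ 2) ^ s * ‖H t j‖ ^ 2
              ≤ (1 + jnorm n j ^ 2) ^ s * (2 * Real.exp
                  (-(min ((∑ i, bt i * (j i : ℝ)) ^ 2) 1 * t) / 5)
                  * (‖V 0 j‖ ^ 2 + ‖H 0 j‖ ^ 2)) :=
                mul_le_mul_of_nonneg_left hHt hws
          _ = 2 * (Real.exp (-(min ((∑ i, bt i * (j i : ℝ)) ^ 2) 1 * t) / 5)
                  * (1 + jnorm n j ^ 2) ^ s) * (‖V 0 j‖ ^ 2 + ‖H 0 j‖ ^ 2) := by ring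
          _ ≤ 2 * (CH * (1 + t) ^ (-β) * (1 + jnorm n j ^ 2) ^ (m : ℝ))
                  * (‖V 0 j‖ ^ 2 + ‖H 0 j‖ ^ 2) := by
                apply mul_le_mul_of_nonneg_right ?_ hE0
                linarith
          _ = (2 * CH * (1 + t) ^ (-β))
              * ((1 + jnorm n j ^ 2) ^ (m : ℝ) * (‖V 0 j‖ ^ 2 + ‖H 0 j‖ ^ 2)) := by ring
      have hsqrt := sqrt_tsum_le
        (fun j : Fin n → ℤ => (1 + jnorm n j ^ 2) ^ s * ‖H t j‖ ^ 2)
        (fun j : Fin n → ℤ => (1 + jnorm n j ^ 2) ^ (m : ℝ) * (‖V 0 j‖ ^ 2 + ‖H 0 j‖ ^ 2))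
        (2 * CH * (1 + t) ^ (-β))
        (by positivity)
        (fun j => by positivity)
        claimH hdata
      refine le_trans hsqrt ?_
      have hsplit : Real.sqrt (2 * CH * (1 + t) ^ (-β))
          = Real.sqrt (2 * CH) * (1 + t) ^ (-β / 2) := by
        rw [Real.sqrt_mul (by positivity), sqrt_rpow_half ht1.le]
      rw [hsplit]
      have hexp_eq : (-β / 2 : ℝ) = -(((m : ℝ) - s) / (2 * r)) := by
        rw [hβdef, neg_div, div_div, mul_comm r 2]
      rw [hexp_eq]
      apply mul_le_mul_of_nonneg_right ?_ (Real.sqrt_nonneg _)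
      apply mul_le_mul_of_nonneg_right ?_ (Real.rpow_nonneg ht1.le _)
      have h2c : Real.sqrt (2 * CH) ≤ C := by
        have := hCsq2.1
        calc Real.sqrt (2 * CH) ≤ Real.sqrt (C ^ 2) := Real.sqrt_le_sqrt this
        _ = C := Real.sqrt_sq hC0.le
      exact h2c

end Main
end
end

section
/- Let f, g be functions on T^n with absolutely summable Fourier coefficients and mean-zero f̂(0) = ĝ(0) = 0, and suppose m > 2 + n/2 with f, g ∈ H^m. Then Σ_{j ∈ Z^n \ {0}} |j|² |(f̂ * ĝ)(j)| ≤ C ‖f‖_{H^m} Σ_{j ∈ Z^n \ {0}} |j| |ĝ(j)| + C ‖g‖_{H^m} Σ_{j ∈ Z^n \ {0}} |j| |f̂(j)|. -/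
open scoped ENNReal
open MeasureTheory

lemma jnorm_nonneg (n : ℕ) (j : Fin n → ℤ) : 0 ≤ jnorm n j := Real.sqrt_nonneg _

lemma jnorm_sq (n : ℕ) (j : Fin n → ℤ) : jnorm n j ^ 2 = ∑ i, ((j i : ℝ)) ^ 2 :=
  Real.sq_sqrt (Finset.sum_nonneg fun _ _ => sq_nonneg _)

lemma jnorm_zero (n : ℕ) : jnorm n 0 = 0 := by simp [jnorm]

lemma one_le_jnorm (n : ℕ) {j : Fin n → ℤ} (h : j ≠ 0) : 1 ≤ jnorm n j := by
  rw [jnorm, Real.one_le_sqrt]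
  obtain ⟨i, hi⟩ := Function.ne_iff.mp h
  have hz : j i ≠ 0 := by simpa using hi
  have h2 : (1 : ℤ) ≤ (j i) ^ 2 := by
    nlinarith [Int.one_le_abs hz, sq_abs (j i), abs_nonneg (j i)]
  have h1 : (1 : ℝ) ≤ ((j i : ℝ)) ^ 2 := by exact_mod_cast h2
  exact le_trans h1 (Finset.single_le_sum (f := fun i => ((j i : ℝ)) ^ 2)
    (fun _ _ => sq_nonneg _) (Finset.mem_univ i))

lemma jnorm_add_le (n : ℕ) (a b : Fin n → ℤ) : jnorm n (a + b) ≤ jnorm n a + jnorm n b := by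
  have key : ∀ c : Fin n → ℤ,
      jnorm n c = ‖(WithLp.equiv 2 (Fin n → ℝ)).symm (fun i => (c i : ℝ))‖ := by
    intro c
    rw [EuclideanSpace.norm_eq]
    simp [jnorm, Real.norm_eq_abs, sq_abs]
  rw [key, key, key]
  have he : (WithLp.equiv 2 (Fin n → ℝ)).symm (fun i => ((a + b) i : ℝ))
      = (WithLp.equiv 2 (Fin n → ℝ)).symm (fun i => (a i : ℝ))
        + (WithLp.equiv 2 (Fin n → ℝ)).symm (fun i => (b i : ℝ)) := by
    ext i
    push_cast [WithLp.equiv_symm_apply, PiLp.toLp_apply]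
    simp
  rw [he]
  exact norm_add_le _ _

lemma jnorm_key (n : ℕ) {l k : Fin n → ℤ} (hl : l ≠ 0) (hk : k ≠ 0) :
    jnorm n (l + k) ^ 2 ≤ 2 * jnorm n l ^ 2 * jnorm n k + 2 * jnorm n k ^ 2 * jnorm n l := by
  have hL := one_le_jnorm n hl
  have hK := one_le_jnorm n hk
  have htri := jnorm_add_le n l k
  have h0 := jnorm_nonneg n (l + k)
  have h1 : jnorm n (l + k) ^ 2 ≤ (jnorm n l + jnorm n k) ^ 2 := by nlinarith
  nlinarith [sq_nonneg (jnorm n l - jnorm n k),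
    mul_nonneg (mul_nonneg (by norm_num : (0:ℝ) ≤ 2) (sq_nonneg (jnorm n l))) (sub_nonneg.mpr hK),
    mul_nonneg (mul_nonneg (by norm_num : (0:ℝ) ≤ 2) (sq_nonneg (jnorm n k))) (sub_nonneg.mpr hL)]

lemma summable_aux {t : ℝ} (ht : t < -(1/2)) : Summable (fun a : ℤ => (1 + (a : ℝ) ^ 2) ^ t) := by
  have hb : (1 : ℝ) < -(2 * t) := by linarith
  have h1 : Summable (fun a : ℤ => |(a : ℝ)| ^ (2 * t)) := by
    simpa using Real.summable_abs_int_rpow hb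
  have h2 : Summable (fun a : ℤ => if a = 0 then (1 : ℝ) else 0) := by
    refine summable_of_ne_finset_zero (s := {0}) ?_
    intro b hb'
    simp only [Finset.mem_singleton] at hb'
    simp [hb']
  refine Summable.of_nonneg_of_le (fun a => Real.rpow_nonneg (by positivity) t) (fun a => ?_)
    (h1.add h2)
  by_cases ha : a = 0
  · subst ha
    simp only [Int.cast_zero, ne_eq, OfNat.ofNat_ne_zero, not_false_eq_true, zero_pow, add_zero,
      Real.one_rpow, abs_zero, if_pos rfl]
    rw [Real.zero_rpow (by linarith)]
    norm_num
  · have hca : ((a : ℝ)) ≠ 0 := by exact_mod_cast ha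
    have hpos : (0 : ℝ) < (a : ℝ) ^ 2 := by positivity
    have hle : (1 + (a : ℝ) ^ 2) ^ t ≤ ((a : ℝ) ^ 2) ^ t :=
      Real.rpow_le_rpow_of_nonpos hpos (by linarith) (by linarith)
    have heq : ((a : ℝ) ^ 2) ^ t = |(a : ℝ)| ^ (2 * t) := by
      rw [Real.rpow_mul (abs_nonneg _), show ((2:ℝ) = ((2:ℕ):ℝ)) by norm_num,
        Real.rpow_natCast, sq_abs]
    simp only [if_neg ha, add_zero]
    rw [heq] at hle
    exact hle

lemma summable_pi_prod : ∀ (n : ℕ) (c : ℤ → ℝ), (∀ a, 0 ≤ c a) → Summable c →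
    Summable (fun l : Fin n → ℤ => ∏ i, c (l i)) := by
  intro n
  induction n with
  | zero =>
    intro c _ _
    haveI : Subsingleton (Fin 0 → ℤ) := ⟨fun a b => funext fun i => i.elim0⟩
    exact .of_finite
  | succ n ih =>
    intro c h0 hc
    have h : Summable (fun x : ℤ × (Fin n → ℤ) => c x.1 * ∏ i, c (x.2 i)) :=
      Summable.mul_of_nonneg (f := c) (g := fun l : Fin n → ℤ => ∏ i, c (l i)) hc (ih c h0 hc)
        h0 (fun l => Finset.prod_nonneg fun i _ => h0 _)
    refine ((Fin.consEquiv (fun _ : Fin (n + 1) => ℤ)).summable_iff).mp ?_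
    refine h.congr fun x => ?_
    simp [Fin.prod_univ_succ]

lemma summable_kfun (n : ℕ) (m : ℝ) (hm : 2 + (n : ℝ) / 2 < m) :
    Summable (fun l : Fin n → ℤ => (1 + jnorm n l ^ 2) ^ (2 - m)) := by
  rcases Nat.eq_zero_or_pos n with hn | hn
  · subst hn
    haveI : Subsingleton (Fin 0 → ℤ) := ⟨fun a b => funext fun i => i.elim0⟩
    exact .of_finite
  have hnR : (0 : ℝ) < n := by exact_mod_cast hn
  set t : ℝ := (2 - m) / n with htdef
  have ht : t < -(1/2) := by
    rw [htdef, div_lt_iff₀ hnR]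
    nlinarith
  have hc := summable_aux ht
  have hprod := summable_pi_prod n (fun a => (1 + (a : ℝ) ^ 2) ^ t)
    (fun a => Real.rpow_nonneg (by positivity) t) hc
  refine Summable.of_nonneg_of_le (fun l => Real.rpow_nonneg (by positivity) _)
    (fun l => ?_) hprod
  have hsum : jnorm n l ^ 2 = ∑ i, ((l i : ℝ)) ^ 2 := jnorm_sq n l
  have hbase : (0 : ℝ) < 1 + jnorm n l ^ 2 := by positivity
  have key : (1 + jnorm n l ^ 2) ^ (2 - m) = ∏ _i : Fin n, (1 + jnorm n l ^ 2) ^ t := by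
    rw [Finset.prod_const, ← Real.rpow_natCast ((1 + jnorm n l ^ 2) ^ t),
      ← Real.rpow_mul hbase.le]
    congr 1
    rw [Finset.card_univ, Fintype.card_fin, htdef]
    field_simp
  rw [key]
  refine Finset.prod_le_prod (fun i _ => Real.rpow_nonneg hbase.le t) (fun i _ => ?_)
  refine Real.rpow_le_rpow_of_nonpos (by positivity) ?_ (by linarith)
  rw [hsum]
  have hs : ((l i : ℝ)) ^ 2 ≤ ∑ i', ((l i' : ℝ)) ^ 2 :=
    Finset.single_le_sum (f := fun i' => ((l i' : ℝ)) ^ 2) (fun _ _ => sq_nonneg _) (Finset.mem_univ i)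
  linarith

lemma tsum_holder {α : Type*} (u v : α → ℝ≥0∞) :
    ∑' a, u a * v a ≤ (∑' a, u a ^ (2:ℝ)) ^ (1/2:ℝ) * (∑' a, v a ^ (2:ℝ)) ^ (1/2:ℝ) := by
  letI : MeasurableSpace α := ⊤
  haveI : MeasurableSingletonClass α := ⟨fun _ => MeasurableSpace.measurableSet_top⟩
  have hpq : Real.HolderConjugate 2 2 := Real.holderConjugate_iff.mpr ⟨one_lt_two, by norm_num⟩
  have H := ENNReal.lintegral_mul_le_Lp_mul_Lq (μ := Measure.count) hpq
    (f := u) (g := v) measurable_from_top.aemeasurable measurable_from_top.aemeasurable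
  simp only [Pi.mul_apply, lintegral_count] at H
  exact H

/-- Bilinear convolution estimate.  Let `f, g` on `Tⁿ` have absolutely summable,
mean-zero Fourier coefficients and lie in `H^m` with `m > 2 + n/2`.  Then
`Σ_{j≠0} |j|² |(f̂ * ĝ)(j)| ≤ C ‖f‖_{H^m} Σ_{j≠0} |j||ĝ(j)| + C ‖g‖_{H^m} Σ_{j≠0} |j||f̂(j)|`,
where `(f̂ * ĝ)(j) = Σ_k f̂(j−k) ĝ(k)` and `‖f‖²_{H^m} = Σ_j (1+|j|²)^m |f̂(j)|²`. -/
theorem stmt_15 (n : ℕ) (m : ℝ) (hm : 2 + (n : ℝ) / 2 < m) :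
    ∃ C > 0, ∀ fhat ghat : (Fin n → ℤ) → ℂ,
      fhat 0 = 0 → ghat 0 = 0 →
      Summable (fun j : Fin n → ℤ => ‖fhat j‖) →
      Summable (fun j : Fin n → ℤ => ‖ghat j‖) →
      Summable (fun j : Fin n → ℤ => (1 + jnorm n j ^ 2) ^ m * ‖fhat j‖ ^ 2) →
      Summable (fun j : Fin n → ℤ => (1 + jnorm n j ^ 2) ^ m * ‖ghat j‖ ^ 2) →
      Summable (fun j : Fin n → ℤ => jnorm n j * ‖fhat j‖) →
      Summable (fun j : Fin n → ℤ => jnorm n j * ‖ghat j‖) →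
      (∑' j : {j : Fin n → ℤ // j ≠ 0},
          ENNReal.ofReal (jnorm n j.1 ^ 2 * ‖∑' k : Fin n → ℤ, fhat (j.1 - k) * ghat k‖))
        ≤ ENNReal.ofReal
            (C * Real.sqrt (∑' j : Fin n → ℤ, (1 + jnorm n j ^ 2) ^ m * ‖fhat j‖ ^ 2) *
                (∑' j : {j : Fin n → ℤ // j ≠ 0}, jnorm n j.1 * ‖ghat j.1‖)
              + C * Real.sqrt (∑' j : Fin n → ℤ, (1 + jnorm n j ^ 2) ^ m * ‖ghat j‖ ^ 2) *
                  ∑' j : {j : Fin n → ℤ // j ≠ 0}, jnorm n j.1 * ‖fhat j.1‖) := by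
  have hksum := summable_kfun n m hm
  set K : ℝ := ∑' l : Fin n → ℤ, (1 + jnorm n l ^ 2) ^ (2 - m) with hKdef
  have hK0 : 0 < K := by
    have h1 : ((1 : ℝ) + jnorm n (0 : Fin n → ℤ) ^ 2) ^ (2 - m) ≤ K :=
      Summable.le_tsum hksum 0 (fun j _ => Real.rpow_nonneg (by positivity) _)
    rw [jnorm_zero] at h1
    norm_num at h1
    linarith
  have hsqK : 0 < Real.sqrt K := Real.sqrt_pos.mpr hK0
  refine ⟨2 * Real.sqrt K, by linarith, ?_⟩
  intro fhat ghat hf0 hg0 hfs hgs hfm hgm hf1 hg1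
  -- Cauchy-Schwarz step
  have stepCS : ∀ φ : (Fin n → ℤ) → ℂ,
      Summable (fun l : Fin n → ℤ => (1 + jnorm n l ^ 2) ^ m * ‖φ l‖ ^ 2) →
      (∑' l : Fin n → ℤ, ENNReal.ofReal (jnorm n l ^ 2 * ‖φ l‖))
        ≤ ENNReal.ofReal (Real.sqrt K) *
            ENNReal.ofReal (Real.sqrt (∑' l : Fin n → ℤ, (1 + jnorm n l ^ 2) ^ m * ‖φ l‖ ^ 2)) := by
    intro φ hφ
    set H : ℝ := ∑' l : Fin n → ℤ, (1 + jnorm n l ^ 2) ^ m * ‖φ l‖ ^ 2 with hHdef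
    have hH0 : 0 ≤ H :=
      tsum_nonneg fun l => mul_nonneg (Real.rpow_nonneg (by positivity) _) (sq_nonneg _)
    set u : (Fin n → ℤ) → ℝ≥0∞ :=
      fun l => ENNReal.ofReal (jnorm n l ^ 2 * (1 + jnorm n l ^ 2) ^ (-(m/2))) with hu
    set v : (Fin n → ℤ) → ℝ≥0∞ :=
      fun l => ENNReal.ofReal ((1 + jnorm n l ^ 2) ^ (m/2) * ‖φ l‖) with hv
    have hbase : ∀ l : Fin n → ℤ, (0:ℝ) < 1 + jnorm n l ^ 2 := fun l => by positivity
    have huv : ∀ l : Fin n → ℤ, ENNReal.ofReal (jnorm n l ^ 2 * ‖φ l‖) = u l * v l := by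
      intro l
      rw [hu, hv, ← ENNReal.ofReal_mul (by positivity)]
      congr 1
      have hcancel : (1 + jnorm n l ^ 2) ^ (-(m/2)) * (1 + jnorm n l ^ 2) ^ (m/2) = 1 := by
        rw [← Real.rpow_add (hbase l)]
        norm_num
      calc jnorm n l ^ 2 * ‖φ l‖
          = (jnorm n l ^ 2 * ‖φ l‖) *
            ((1 + jnorm n l ^ 2) ^ (-(m/2)) * (1 + jnorm n l ^ 2) ^ (m/2)) := by
            rw [hcancel]; ring
        _ = jnorm n l ^ 2 * (1 + jnorm n l ^ 2) ^ (-(m/2)) *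
            ((1 + jnorm n l ^ 2) ^ (m/2) * ‖φ l‖) := by ring
    have hu2 : (∑' l : Fin n → ℤ, u l ^ (2:ℝ)) ≤ ENNReal.ofReal K := by
      have hptw : ∀ l : Fin n → ℤ,
          u l ^ (2:ℝ) ≤ ENNReal.ofReal ((1 + jnorm n l ^ 2) ^ (2 - m)) := by
        intro l
        rw [hu, ENNReal.ofReal_rpow_of_nonneg (by positivity) (by norm_num)]
        apply ENNReal.ofReal_le_ofReal
        have hb2 : ((1 + jnorm n l ^ 2) ^ (-(m/2))) * ((1 + jnorm n l ^ 2) ^ (-(m/2)))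
            = (1 + jnorm n l ^ 2) ^ (-m) := by
          rw [← Real.rpow_add (hbase l)]
          congr 1
          ring
        have e0 : (jnorm n l ^ 2 * (1 + jnorm n l ^ 2) ^ (-(m/2))) ^ (2:ℝ)
            = (jnorm n l ^ 2) ^ 2 * (1 + jnorm n l ^ 2) ^ (-m) := by
          rw [Real.rpow_two, ← hb2]
          ring
        have h1 : (jnorm n l ^ 2) ^ 2 ≤ (1 + jnorm n l ^ 2) ^ 2 := by
          nlinarith [sq_nonneg (jnorm n l)]
        have h2 : ((1:ℝ) + jnorm n l ^ 2) ^ (2:ℕ) * (1 + jnorm n l ^ 2) ^ (-m)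
            = (1 + jnorm n l ^ 2) ^ (2 - m) := by
          rw [← Real.rpow_natCast _ 2, ← Real.rpow_add (hbase l)]
          norm_num [sub_eq_add_neg]
        calc (jnorm n l ^ 2 * (1 + jnorm n l ^ 2) ^ (-(m/2))) ^ (2:ℝ)
            = (jnorm n l ^ 2) ^ 2 * (1 + jnorm n l ^ 2) ^ (-m) := e0
          _ ≤ (1 + jnorm n l ^ 2) ^ (2:ℕ) * (1 + jnorm n l ^ 2) ^ (-m) :=
              mul_le_mul_of_nonneg_right h1 (Real.rpow_nonneg (hbase l).le _)
          _ = (1 + jnorm n l ^ 2) ^ (2 - m) := h2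
      calc (∑' l : Fin n → ℤ, u l ^ (2:ℝ))
          ≤ ∑' l : Fin n → ℤ, ENNReal.ofReal ((1 + jnorm n l ^ 2) ^ (2 - m)) :=
            ENNReal.tsum_le_tsum hptw
        _ = ENNReal.ofReal K :=
            (ENNReal.ofReal_tsum_of_nonneg
              (fun l => Real.rpow_nonneg (hbase l).le _) hksum).symm
    have hv2 : (∑' l : Fin n → ℤ, v l ^ (2:ℝ)) = ENNReal.ofReal H := by
      have hptw : ∀ l : Fin n → ℤ,
          v l ^ (2:ℝ) = ENNReal.ofReal ((1 + jnorm n l ^ 2) ^ m * ‖φ l‖ ^ 2) := by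
        intro l
        rw [hv, ENNReal.ofReal_rpow_of_nonneg (by positivity) (by norm_num)]
        congr 1
        have e1 : (((1:ℝ) + jnorm n l ^ 2) ^ (m/2)) ^ (2:ℝ) = (1 + jnorm n l ^ 2) ^ m := by
          rw [← Real.rpow_mul (hbase l).le]
          congr 1
          ring
        have e2 : ‖φ l‖ ^ (2:ℝ) = ‖φ l‖ ^ 2 := Real.rpow_two _
        rw [Real.mul_rpow (Real.rpow_nonneg (hbase l).le _) (norm_nonneg _), e1, e2]
      calc (∑' l : Fin n → ℤ, v l ^ (2:ℝ))
          = ∑' l : Fin n → ℤ, ENNReal.ofReal ((1 + jnorm n l ^ 2) ^ m * ‖φ l‖ ^ 2) :=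
            tsum_congr hptw
        _ = ENNReal.ofReal H :=
            (ENNReal.ofReal_tsum_of_nonneg
              (fun l => mul_nonneg (Real.rpow_nonneg (hbase l).le _) (sq_nonneg _)) hφ).symm
    calc (∑' l : Fin n → ℤ, ENNReal.ofReal (jnorm n l ^ 2 * ‖φ l‖))
        = ∑' l : Fin n → ℤ, u l * v l := tsum_congr huv
      _ ≤ (∑' l : Fin n → ℤ, u l ^ (2:ℝ)) ^ (1/2:ℝ) *
            (∑' l : Fin n → ℤ, v l ^ (2:ℝ)) ^ (1/2:ℝ) := tsum_holder u v
      _ ≤ (ENNReal.ofReal K) ^ (1/2:ℝ) * (ENNReal.ofReal H) ^ (1/2:ℝ) :=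
          mul_le_mul' (ENNReal.rpow_le_rpow hu2 (by norm_num)) (le_of_eq (by rw [hv2]))
      _ = ENNReal.ofReal (Real.sqrt K) * ENNReal.ofReal (Real.sqrt H) := by
          rw [ENNReal.ofReal_rpow_of_nonneg hK0.le (by norm_num),
            ENNReal.ofReal_rpow_of_nonneg hH0 (by norm_num),
            Real.sqrt_eq_rpow, Real.sqrt_eq_rpow]
  -- summability of convolution terms
  have hconv : ∀ j : Fin n → ℤ, Summable (fun k : Fin n → ℤ => ‖fhat (j - k) * ghat k‖) := by
    intro j
    have hb : ∀ k : Fin n → ℤ, ‖fhat (j - k) * ghat k‖ ≤ (∑' l : Fin n → ℤ, ‖fhat l‖) * ‖ghat k‖ := by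
      intro k
      rw [norm_mul]
      exact mul_le_mul_of_nonneg_right (Summable.le_tsum hfs _ (fun _ _ => norm_nonneg _)) (norm_nonneg _)
    exact Summable.of_nonneg_of_le (fun k => norm_nonneg _) hb (hgs.mul_left _)
  have step2 : ∀ j : Fin n → ℤ,
      ENNReal.ofReal (jnorm n j ^ 2 * ‖∑' k : Fin n → ℤ, fhat (j - k) * ghat k‖)
        ≤ ∑' k : Fin n → ℤ, ENNReal.ofReal (jnorm n j ^ 2 * (‖fhat (j - k)‖ * ‖ghat k‖)) := by
    intro j
    have h1 : jnorm n j ^ 2 * ‖∑' k : Fin n → ℤ, fhat (j - k) * ghat k‖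
        ≤ ∑' k : Fin n → ℤ, jnorm n j ^ 2 * (‖fhat (j - k)‖ * ‖ghat k‖) := by
      rw [tsum_mul_left]
      refine mul_le_mul_of_nonneg_left ?_ (sq_nonneg _)
      refine le_trans (norm_tsum_le_tsum_norm (hconv j)) (le_of_eq ?_)
      exact tsum_congr fun k => norm_mul _ _
    refine le_trans (ENNReal.ofReal_le_ofReal h1) (le_of_eq ?_)
    refine ENNReal.ofReal_tsum_of_nonneg (fun k => by positivity) ?_
    exact ((hconv j).congr (fun k => norm_mul _ _)).mul_left _
  have step3 : ∀ j k : Fin n → ℤ,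
      ENNReal.ofReal (jnorm n j ^ 2 * (‖fhat (j - k)‖ * ‖ghat k‖))
        ≤ 2 * ENNReal.ofReal (jnorm n (j - k) ^ 2 * ‖fhat (j - k)‖) *
              ENNReal.ofReal (jnorm n k * ‖ghat k‖)
          + 2 * ENNReal.ofReal (jnorm n k ^ 2 * ‖ghat k‖) *
              ENNReal.ofReal (jnorm n (j - k) * ‖fhat (j - k)‖) := by
    intro j k
    have hreal : jnorm n j ^ 2 * (‖fhat (j - k)‖ * ‖ghat k‖)
        ≤ 2 * (jnorm n (j - k) ^ 2 * ‖fhat (j - k)‖) * (jnorm n k * ‖ghat k‖)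
          + 2 * (jnorm n k ^ 2 * ‖ghat k‖) * (jnorm n (j - k) * ‖fhat (j - k)‖) := by
      by_cases h1 : j - k = 0
      · rw [h1, hf0]
        simp
      by_cases h2 : k = 0
      · rw [h2, hg0]
        simp
      have hj2 : jnorm n j ^ 2
          ≤ 2 * jnorm n (j - k) ^ 2 * jnorm n k + 2 * jnorm n k ^ 2 * jnorm n (j - k) := by
        have hkey := jnorm_key n h1 h2
        rwa [sub_add_cancel] at hkey
      have hFn : (0:ℝ) ≤ ‖fhat (j - k)‖ := norm_nonneg _
      have hGn : (0:ℝ) ≤ ‖ghat k‖ := norm_nonneg _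
      nlinarith [mul_nonneg (sub_nonneg.mpr hj2) (mul_nonneg hFn hGn)]
    refine le_trans (ENNReal.ofReal_le_ofReal hreal) (le_of_eq ?_)
    have hsplit : ∀ a b : ℝ, 0 ≤ a → 0 ≤ b →
        ENNReal.ofReal (2 * a * b) = 2 * ENNReal.ofReal a * ENNReal.ofReal b := by
      intro a b ha hb
      rw [mul_assoc, ENNReal.ofReal_mul (by norm_num), ENNReal.ofReal_mul ha,
        ENNReal.ofReal_ofNat, mul_assoc]
    have hA : (0:ℝ) ≤ jnorm n (j - k) ^ 2 * ‖fhat (j - k)‖ :=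
      mul_nonneg (pow_nonneg (jnorm_nonneg _ _) 2) (norm_nonneg _)
    have hB : (0:ℝ) ≤ jnorm n k * ‖ghat k‖ :=
      mul_nonneg (jnorm_nonneg _ _) (norm_nonneg _)
    have hC : (0:ℝ) ≤ jnorm n k ^ 2 * ‖ghat k‖ :=
      mul_nonneg (pow_nonneg (jnorm_nonneg _ _) 2) (norm_nonneg _)
    have hD : (0:ℝ) ≤ jnorm n (j - k) * ‖fhat (j - k)‖ :=
      mul_nonneg (jnorm_nonneg _ _) (norm_nonneg _)
    rw [ENNReal.ofReal_add (mul_nonneg (mul_nonneg (by norm_num) hA) hB)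
        (mul_nonneg (mul_nonneg (by norm_num) hC) hD),
      hsplit _ _ hA hB, hsplit _ _ hC hD]
  have step4 : ∀ A B : (Fin n → ℤ) → ℝ≥0∞,
      (∑' j : Fin n → ℤ, ∑' k : Fin n → ℤ, A (j - k) * B k)
        = (∑' l : Fin n → ℤ, A l) * (∑' k : Fin n → ℤ, B k) := by
    intro A B
    rw [ENNReal.tsum_comm]
    calc (∑' k : Fin n → ℤ, ∑' j : Fin n → ℤ, A (j - k) * B k)
        = ∑' k : Fin n → ℤ, (∑' j : Fin n → ℤ, A (j - k)) * B k := by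
          refine tsum_congr fun k => ?_
          rw [ENNReal.tsum_mul_right]
      _ = ∑' k : Fin n → ℤ, (∑' l : Fin n → ℤ, A l) * B k := by
          refine tsum_congr fun k => ?_
          congr 1
          exact (Equiv.subRight k).tsum_eq A
      _ = _ := ENNReal.tsum_mul_left
  -- subtype sums
  have hBsub : ∀ φ : (Fin n → ℤ) → ℂ, φ 0 = 0 →
      (∑' j : {j : Fin n → ℤ // j ≠ 0}, jnorm n j.1 * ‖φ j.1‖)
        = ∑' j : Fin n → ℤ, jnorm n j * ‖φ j‖ := by
    intro φ h0
    refine tsum_subtype_eq_of_support_subset (s := {j : Fin n → ℤ | j ≠ 0}) (f := fun j => jnorm n j * ‖φ j‖) ?_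
    intro j hj
    simp only [Function.mem_support] at hj
    simp only [Set.mem_setOf_eq]
    rintro rfl
    exact hj (by rw [jnorm_zero]; exact zero_mul _)
  have hQg : (∑' k : Fin n → ℤ, ENNReal.ofReal (jnorm n k * ‖ghat k‖))
      = ENNReal.ofReal (∑' k : Fin n → ℤ, jnorm n k * ‖ghat k‖) :=
    (ENNReal.ofReal_tsum_of_nonneg
      (fun k => mul_nonneg (jnorm_nonneg _ _) (norm_nonneg _)) hg1).symm
  have hSf : (∑' l : Fin n → ℤ, ENNReal.ofReal (jnorm n l * ‖fhat l‖))
      = ENNReal.ofReal (∑' l : Fin n → ℤ, jnorm n l * ‖fhat l‖) :=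
    (ENNReal.ofReal_tsum_of_nonneg
      (fun k => mul_nonneg (jnorm_nonneg _ _) (norm_nonneg _)) hf1).symm
  have hLHS : (∑' j : {j : Fin n → ℤ // j ≠ 0},
        ENNReal.ofReal (jnorm n j.1 ^ 2 * ‖∑' k : Fin n → ℤ, fhat (j.1 - k) * ghat k‖))
      ≤ ∑' j : Fin n → ℤ,
        ENNReal.ofReal (jnorm n j ^ 2 * ‖∑' k : Fin n → ℤ, fhat (j - k) * ghat k‖) := by
    refine le_trans (le_of_eq (tsum_subtype {j : Fin n → ℤ | j ≠ 0}
      (fun j => ENNReal.ofReal (jnorm n j ^ 2 * ‖∑' k : Fin n → ℤ, fhat (j - k) * ghat k‖)))) ?_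
    exact ENNReal.tsum_le_tsum (fun j => Set.indicator_le_self _ _ j)
  rw [hBsub ghat hg0, hBsub fhat hf0]
  have h4 : ∀ a b c : ℝ, 0 ≤ a → 0 ≤ b → 0 ≤ c →
      ENNReal.ofReal (2 * a * b * c)
        = 2 * ENNReal.ofReal a * ENNReal.ofReal b * ENNReal.ofReal c := by
    intro a b c ha hb hc
    rw [ENNReal.ofReal_mul (by positivity), ENNReal.ofReal_mul (by positivity),
      ENNReal.ofReal_mul (by norm_num), ENNReal.ofReal_ofNat]
  have hHf0 : 0 ≤ Real.sqrt (∑' j : Fin n → ℤ, (1 + jnorm n j ^ 2) ^ m * ‖fhat j‖ ^ 2) :=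
    Real.sqrt_nonneg _
  have hHg0 : 0 ≤ Real.sqrt (∑' j : Fin n → ℤ, (1 + jnorm n j ^ 2) ^ m * ‖ghat j‖ ^ 2) :=
    Real.sqrt_nonneg _
  have hBg0 : 0 ≤ ∑' k : Fin n → ℤ, jnorm n k * ‖ghat k‖ :=
    tsum_nonneg fun k => mul_nonneg (jnorm_nonneg _ _) (norm_nonneg _)
  have hBf0 : 0 ≤ ∑' l : Fin n → ℤ, jnorm n l * ‖fhat l‖ :=
    tsum_nonneg fun k => mul_nonneg (jnorm_nonneg _ _) (norm_nonneg _)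
  calc (∑' j : {j : Fin n → ℤ // j ≠ 0},
        ENNReal.ofReal (jnorm n j.1 ^ 2 * ‖∑' k : Fin n → ℤ, fhat (j.1 - k) * ghat k‖))
      ≤ ∑' j : Fin n → ℤ,
          ENNReal.ofReal (jnorm n j ^ 2 * ‖∑' k : Fin n → ℤ, fhat (j - k) * ghat k‖) := hLHS
    _ ≤ ∑' j : Fin n → ℤ, ∑' k : Fin n → ℤ,
          ENNReal.ofReal (jnorm n j ^ 2 * (‖fhat (j - k)‖ * ‖ghat k‖)) :=
        ENNReal.tsum_le_tsum step2
    _ ≤ ∑' j : Fin n → ℤ, ∑' k : Fin n → ℤ,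
          (2 * ENNReal.ofReal (jnorm n (j - k) ^ 2 * ‖fhat (j - k)‖) *
              ENNReal.ofReal (jnorm n k * ‖ghat k‖)
            + 2 * ENNReal.ofReal (jnorm n k ^ 2 * ‖ghat k‖) *
              ENNReal.ofReal (jnorm n (j - k) * ‖fhat (j - k)‖)) :=
        ENNReal.tsum_le_tsum fun j => ENNReal.tsum_le_tsum fun k => step3 j k
    _ = 2 * ((∑' l : Fin n → ℤ, ENNReal.ofReal (jnorm n l ^ 2 * ‖fhat l‖)) *
            ∑' k : Fin n → ℤ, ENNReal.ofReal (jnorm n k * ‖ghat k‖))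
        + 2 * ((∑' l : Fin n → ℤ, ENNReal.ofReal (jnorm n l * ‖fhat l‖)) *
            ∑' k : Fin n → ℤ, ENNReal.ofReal (jnorm n k ^ 2 * ‖ghat k‖)) := by
        have h1 : ∀ j : Fin n → ℤ,
            (∑' k : Fin n → ℤ,
              (2 * ENNReal.ofReal (jnorm n (j - k) ^ 2 * ‖fhat (j - k)‖) *
                  ENNReal.ofReal (jnorm n k * ‖ghat k‖)
                + 2 * ENNReal.ofReal (jnorm n k ^ 2 * ‖ghat k‖) *
                  ENNReal.ofReal (jnorm n (j - k) * ‖fhat (j - k)‖)))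
            = 2 * (∑' k : Fin n → ℤ,
                  ENNReal.ofReal (jnorm n (j - k) ^ 2 * ‖fhat (j - k)‖) *
                    ENNReal.ofReal (jnorm n k * ‖ghat k‖))
              + 2 * (∑' k : Fin n → ℤ,
                  ENNReal.ofReal (jnorm n (j - k) * ‖fhat (j - k)‖) *
                    ENNReal.ofReal (jnorm n k ^ 2 * ‖ghat k‖)) := by
          intro j
          rw [ENNReal.tsum_add]
          congr 1
          · rw [← ENNReal.tsum_mul_left]
            exact tsum_congr fun k => by ring
          · rw [← ENNReal.tsum_mul_left]
            exact tsum_congr fun k => by ring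
        calc (∑' j : Fin n → ℤ, ∑' k : Fin n → ℤ,
              (2 * ENNReal.ofReal (jnorm n (j - k) ^ 2 * ‖fhat (j - k)‖) *
                  ENNReal.ofReal (jnorm n k * ‖ghat k‖)
                + 2 * ENNReal.ofReal (jnorm n k ^ 2 * ‖ghat k‖) *
                  ENNReal.ofReal (jnorm n (j - k) * ‖fhat (j - k)‖)))
            = ∑' j : Fin n → ℤ,
              (2 * (∑' k : Fin n → ℤ,
                  ENNReal.ofReal (jnorm n (j - k) ^ 2 * ‖fhat (j - k)‖) *
                    ENNReal.ofReal (jnorm n k * ‖ghat k‖))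
                + 2 * (∑' k : Fin n → ℤ,
                  ENNReal.ofReal (jnorm n (j - k) * ‖fhat (j - k)‖) *
                    ENNReal.ofReal (jnorm n k ^ 2 * ‖ghat k‖))) := tsum_congr h1
          _ = 2 * (∑' j : Fin n → ℤ, ∑' k : Fin n → ℤ,
                  ENNReal.ofReal (jnorm n (j - k) ^ 2 * ‖fhat (j - k)‖) *
                    ENNReal.ofReal (jnorm n k * ‖ghat k‖))
              + 2 * (∑' j : Fin n → ℤ, ∑' k : Fin n → ℤ,
                  ENNReal.ofReal (jnorm n (j - k) * ‖fhat (j - k)‖) *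
                    ENNReal.ofReal (jnorm n k ^ 2 * ‖ghat k‖)) := by
              rw [ENNReal.tsum_add]
              congr 1 <;> exact ENNReal.tsum_mul_left
          _ = _ := by
              rw [step4 (fun l => ENNReal.ofReal (jnorm n l ^ 2 * ‖fhat l‖))
                  (fun k => ENNReal.ofReal (jnorm n k * ‖ghat k‖)),
                step4 (fun l => ENNReal.ofReal (jnorm n l * ‖fhat l‖))
                  (fun k => ENNReal.ofReal (jnorm n k ^ 2 * ‖ghat k‖))]
    _ ≤ 2 * ((ENNReal.ofReal (Real.sqrt K) *
            ENNReal.ofReal (Real.sqrt (∑' j : Fin n → ℤ, (1 + jnorm n j ^ 2) ^ m * ‖fhat j‖ ^ 2))) *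
            ∑' k : Fin n → ℤ, ENNReal.ofReal (jnorm n k * ‖ghat k‖))
        + 2 * ((∑' l : Fin n → ℤ, ENNReal.ofReal (jnorm n l * ‖fhat l‖)) *
            (ENNReal.ofReal (Real.sqrt K) *
              ENNReal.ofReal (Real.sqrt (∑' j : Fin n → ℤ, (1 + jnorm n j ^ 2) ^ m * ‖ghat j‖ ^ 2)))) := by
        gcongr
        · exact stepCS fhat hfm
        · exact stepCS ghat hgm
    _ = ENNReal.ofReal (2 * Real.sqrt K *
            Real.sqrt (∑' j : Fin n → ℤ, (1 + jnorm n j ^ 2) ^ m * ‖fhat j‖ ^ 2) *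
            (∑' k : Fin n → ℤ, jnorm n k * ‖ghat k‖))
        + ENNReal.ofReal (2 * Real.sqrt K *
            Real.sqrt (∑' j : Fin n → ℤ, (1 + jnorm n j ^ 2) ^ m * ‖ghat j‖ ^ 2) *
            (∑' l : Fin n → ℤ, jnorm n l * ‖fhat l‖)) := by
        rw [hQg, hSf, h4 _ _ _ hsqK.le hHf0 hBg0, h4 _ _ _ hsqK.le hHg0 hBf0]
        ring
    _ = _ := by
        rw [← ENNReal.ofReal_add (by positivity) (by positivity)]
end
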